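/- arXiv:1907.05221 — 10 statements merged into one kernel-verified Lean document; each statement's English description precedes it below -/
import Mathlib

section
/- Let (u, v, ρ, s) be a C¹ supersonic solution of the smooth-flow 2D steady full Euler system on U, with flow angle σ, Mach angle A, α = σ + A, β = σ − A, and suppose cos α ≠ 0 and cos β ≠ 0 on U. Then ∂₊u + tan β · ∂₊v = ω sin A cos A / cos β and ∂₋u + tan α · ∂₋v = −ω sin A cos A / cos α on U, where ω = u_y − vₓ. -/
open Real

noncomputable section

/-- Partial derivative in the `x` direction. -/
def pdx (f : ℝ × ℝ → ℝ) (p : ℝ × ℝ) : ℝ := fderiv ℝ f p (1, 0)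

/-- Partial derivative in the `y` direction. -/
def pdy (f : ℝ × ℝ → ℝ) (p : ℝ × ℝ) : ℝ := fderiv ℝ f p (0, 1)

/-- Directional derivative along the direction with angle `θ p`. -/
def dd (θ : ℝ × ℝ → ℝ) (f : ℝ × ℝ → ℝ) (p : ℝ × ℝ) : ℝ :=
  Real.cos (θ p) * pdx f p + Real.sin (θ p) * pdy f p

/-- Sound speed `c = √(γ s ρ^(γ-1))`. -/
def sound (γ : ℝ) (ρ s : ℝ × ℝ → ℝ) (p : ℝ × ℝ) : ℝ :=
  Real.sqrt (γ * s p * ρ p ^ (γ - 1))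

/-- Flow speed `q = √(u² + v²)`. -/
def speed (u v : ℝ × ℝ → ℝ) (p : ℝ × ℝ) : ℝ :=
  Real.sqrt (u p ^ 2 + v p ^ 2)

/-- Vorticity `ω = u_y − vₓ`. -/
def vort (u v : ℝ × ℝ → ℝ) (p : ℝ × ℝ) : ℝ := pdy u p - pdx v p

lemma pdx_mul (f g : ℝ×ℝ→ℝ) (p : ℝ×ℝ) (hf : DifferentiableAt ℝ f p) (hg : DifferentiableAt ℝ g p) :
    pdx (fun q => f q * g q) p = f p * pdx g p + g p * pdx f p := by
  simp [pdx, fderiv_fun_mul hf hg]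

lemma pdy_mul (f g : ℝ×ℝ→ℝ) (p : ℝ×ℝ) (hf : DifferentiableAt ℝ f p) (hg : DifferentiableAt ℝ g p) :
    pdy (fun q => f q * g q) p = f p * pdy g p + g p * pdy f p := by
  simp [pdy, fderiv_fun_mul hf hg]

lemma pdx_rpow (f : ℝ×ℝ→ℝ) (γ : ℝ) (p : ℝ×ℝ) (hf : DifferentiableAt ℝ f p) (h : f p ≠ 0) :
    pdx (fun q => f q ^ γ) p = (γ * f p ^ (γ-1)) * pdx f p := by
  rw [pdx, (hf.hasFDerivAt.rpow_const (Or.inl h)).fderiv]; simp [pdx]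

lemma pdy_rpow (f : ℝ×ℝ→ℝ) (γ : ℝ) (p : ℝ×ℝ) (hf : DifferentiableAt ℝ f p) (h : f p ≠ 0) :
    pdy (fun q => f q ^ γ) p = (γ * f p ^ (γ-1)) * pdy f p := by
  rw [pdy, (hf.hasFDerivAt.rpow_const (Or.inl h)).fderiv]; simp [pdy]

/-- along characteristics,
`∂₊u + tan β · ∂₊v = ω sin A cos A / cos β` and
`∂₋u + tan α · ∂₋v = −ω sin A cos A / cos α`. -/
theorem stmt_2 (γ : ℝ) (hγ : 1 < γ) (U : Set (ℝ × ℝ)) (hU : IsOpen U)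
    (u v ρ s σ A : ℝ × ℝ → ℝ)
    (hu : ContDiffOn ℝ 1 u U) (hv : ContDiffOn ℝ 1 v U)
    (hρ : ContDiffOn ℝ 1 ρ U) (hs : ContDiffOn ℝ 1 s U)
    (hσ : ContDiffOn ℝ 1 σ U) (hA : ContDiffOn ℝ 1 A U)
    (hρpos : ∀ p ∈ U, 0 < ρ p) (hspos : ∀ p ∈ U, 0 < s p)
    (hmass : ∀ p ∈ U, pdx (fun q => ρ q * u q) p + pdy (fun q => ρ q * v q) p = 0)
    (hmomx : ∀ p ∈ U,
      u p * pdx u p + v p * pdy u p + (ρ p)⁻¹ * pdx (fun q => s q * ρ q ^ γ) p = 0)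
    (hmomy : ∀ p ∈ U,
      u p * pdx v p + v p * pdy v p + (ρ p)⁻¹ * pdy (fun q => s q * ρ q ^ γ) p = 0)
    (hent : ∀ p ∈ U, u p * pdx s p + v p * pdy s p = 0)
    (hsup : ∀ p ∈ U, (sound γ ρ s p) ^ 2 < u p ^ 2 + v p ^ 2)
    (huσ : ∀ p ∈ U, u p = speed u v p * Real.cos (σ p))
    (hvσ : ∀ p ∈ U, v p = speed u v p * Real.sin (σ p))
    (hsinA : ∀ p ∈ U, Real.sin (A p) = sound γ ρ s p / speed u v p)
    (hA0 : ∀ p ∈ U, 0 < A p) (hA2 : ∀ p ∈ U, A p < Real.pi / 2)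
    (hcosα : ∀ p ∈ U, Real.cos (σ p + A p) ≠ 0)
    (hcosβ : ∀ p ∈ U, Real.cos (σ p - A p) ≠ 0) :
    ∀ p ∈ U,
      (dd (fun q => σ q + A q) u p +
          Real.tan (σ p - A p) * dd (fun q => σ q + A q) v p =
        vort u v p * Real.sin (A p) * Real.cos (A p) / Real.cos (σ p - A p)) ∧
      (dd (fun q => σ q - A q) u p +
          Real.tan (σ p + A p) * dd (fun q => σ q - A q) v p =
        -(vort u v p * Real.sin (A p) * Real.cos (A p)) / Real.cos (σ p + A p)) := by
  intro p hp
  have hmem := hU.mem_nhds hp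
  have du : DifferentiableAt ℝ u p := (hu.contDiffAt hmem).differentiableAt one_ne_zero
  have dv : DifferentiableAt ℝ v p := (hv.contDiffAt hmem).differentiableAt one_ne_zero
  have dρ : DifferentiableAt ℝ ρ p := (hρ.contDiffAt hmem).differentiableAt one_ne_zero
  have ds : DifferentiableAt ℝ s p := (hs.contDiffAt hmem).differentiableAt one_ne_zero
  have hρ0 : ρ p ≠ 0 := ne_of_gt (hρpos p hp)
  set ux := pdx u p with hux
  set uy := pdy u p with huy
  set vx := pdx v p with hvx
  set vy := pdy v p with hvy
  set ρx := pdx ρ p with hρx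
  set ρy := pdy ρ p with hρy
  set sx := pdx s p with hsx
  set sy := pdy s p with hsy
  set c := sound γ ρ s p with hc
  set q := speed u v p with hq
  set C := Real.cos (σ p) with hC0
  set S := Real.sin (σ p) with hS0
  set a := Real.sin (A p) with ha0
  set b := Real.cos (A p) with hb0
  -- mass equation expanded
  have hm : ρ p * ux + u p * ρx + (ρ p * vy + v p * ρy) = 0 := by
    have h := hmass p hp
    rwa [pdx_mul _ _ _ dρ du, pdy_mul _ _ _ dρ dv] at h
  -- momentum equations expanded
  have dρg : DifferentiableAt ℝ (fun q => ρ q ^ γ) p := dρ.rpow_const (Or.inl hρ0)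
  have hpxv : pdx (fun q => s q * ρ q ^ γ) p = s p * ((γ * ρ p ^ (γ-1)) * ρx) + ρ p ^ γ * sx := by
    simp only [pdx_mul _ _ _ ds dρg, pdx_rpow _ _ _ dρ hρ0, hρx, hsx]
  have hpyv : pdy (fun q => s q * ρ q ^ γ) p = s p * ((γ * ρ p ^ (γ-1)) * ρy) + ρ p ^ γ * sy := by
    simp only [pdy_mul _ _ _ ds dρg, pdy_rpow _ _ _ dρ hρ0, hρy, hsy]
  have hmx : u p * ux + v p * uy + (ρ p)⁻¹ * (s p * ((γ * ρ p ^ (γ-1)) * ρx) + ρ p ^ γ * sx) = 0 := by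
    have h := hmomx p hp; rwa [hpxv] at h
  have hmy : u p * vx + v p * vy + (ρ p)⁻¹ * (s p * ((γ * ρ p ^ (γ-1)) * ρy) + ρ p ^ γ * sy) = 0 := by
    have h := hmomy p hp; rwa [hpyv] at h
  have he : u p * sx + v p * sy = 0 := hent p hp
  have hinv : (ρ p)⁻¹ * ρ p = 1 := inv_mul_cancel₀ hρ0
  -- key identity
  have hI : u p^2*ux + u p*v p*uy + u p*v p*vx + v p^2*vy
      = (γ*s p*ρ p^(γ-1))*(ux+vy) := by
    linear_combination (u p)*hmx + (v p)*hmy - ((ρ p)⁻¹*ρ p^γ)*he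
      - ((ρ p)⁻¹*(γ*s p*ρ p^(γ-1)))*hm + ((γ*s p*ρ p^(γ-1))*(ux+vy))*hinv
  -- sound speed and flow speed facts
  have hKpos : 0 < γ * s p * ρ p ^ (γ-1) :=
    mul_pos (mul_pos (lt_trans one_pos hγ) (hspos p hp)) (Real.rpow_pos_of_pos (hρpos p hp) (γ-1))
  have hc2 : c^2 = γ * s p * ρ p ^ (γ-1) := Real.sq_sqrt hKpos.le
  have hq2 : q^2 = u p^2 + v p^2 := by
    rw [hq, speed, Real.sq_sqrt (by positivity : (0:ℝ) ≤ u p ^ 2 + v p ^ 2)]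
  have hqpos : 0 < q := by
    rw [hq, speed]
    have := hsup p hp
    have : 0 < u p ^ 2 + v p ^ 2 := lt_of_le_of_lt (sq_nonneg _) this
    exact Real.sqrt_pos.mpr this
  have hqne : q ≠ 0 := ne_of_gt hqpos
  have e1 : u p = q * C := huσ p hp
  have e2 : v p = q * S := hvσ p hp
  have e3 : a * q = c := by
    rw [ha0, hsinA p hp, ← hc, ← hq]; field_simp
  -- the clean identity
  have hIIq : q^2*((C^2 - a^2)*ux + S*C*(uy+vx) + (S^2 - a^2)*vy) = q^2*0 := by
    linear_combination hI - ((u p + q*C)*ux + v p*(uy+vx))*e1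
      - (q*C*(uy+vx) + (v p + q*S)*vy)*e2 - ((c + a*q)*(ux+vy))*e3 - (ux+vy)*hc2
  have hII : (C^2 - a^2)*ux + S*C*(uy+vx) + (S^2 - a^2)*vy = 0 := by
    have := mul_left_cancel₀ (pow_ne_zero 2 hqne) hIIq
    linarith [this]
  have hP : a^2 + b^2 = 1 := sin_sq_add_cos_sq (A p)
  have hCS : S^2 + C^2 = 1 := sin_sq_add_cos_sq (σ p)
  have hβ : C*b + S*a ≠ 0 := by
    have h := hcosβ p hp; rwa [Real.cos_sub] at h
  have hα : C*b - S*a ≠ 0 := by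
    have h := hcosα p hp; rwa [Real.cos_add] at h
  constructor
  · simp only [dd, vort]
    rw [Real.tan_eq_sin_div_cos, Real.cos_sub, Real.sin_sub, Real.cos_add, Real.sin_add]
    simp only [← hux, ← huy, ← hvx, ← hvy, ← hC0, ← hS0, ← ha0, ← hb0]
    field_simp
    linear_combination hII + (C^2*ux + S*C*(uy+vx) + S^2*vy)*hP + (a*b*(uy-vx) - a^2*(ux+vy))*hCS
  · simp only [dd, vort]
    rw [Real.tan_eq_sin_div_cos, Real.cos_sub, Real.sin_sub, Real.cos_add, Real.sin_add]
    simp only [← hux, ← huy, ← hvx, ← hvy, ← hC0, ← hS0, ← ha0, ← hb0]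
    field_simp
    linear_combination hII + (C^2*ux + S*C*(uy+vx) + S^2*vy)*hP - (a*b*(uy-vx) + a^2*(ux+vy))*hCS

end
end

section
/- Let (u, v, ρ, s) be a C¹ supersonic solution of the smooth-flow 2D steady full Euler system on U, with flow angle σ, Mach angle A ∈ (0, π/2), α = σ + A, β = σ − A, κ = 2/(γ−1), j = c/(γ(γ−1)s), Ω = (κ−1)/(κ+1) − tan²A, and ω = u_y − vₓ. Then on U: c∂₊β = −(1+κ) tan A · ∂₊c + ω sin²A tan A + j tan A · ∂₊s; c∂₊α = −((1+κ)/2) Ω sin 2A · ∂₊c − ω sin²A tan A + j tan A cos 2A · ∂₊s; c∂₋α = (1+κ) tan A · ∂₋c + ω sin²A tan A − j tan A · ∂₋s; and c∂₋β = ((1+κ)/2) Ω sin 2A · ∂₋c − ω sin²A tan A − j tan A cos 2A · ∂₋s. -/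
open Real

noncomputable section

/-- `j = c/(γ(γ−1)s)`. -/
def jay (γ : ℝ) (ρ s : ℝ × ℝ → ℝ) (p : ℝ × ℝ) : ℝ :=
  sound γ ρ s p / (γ * (γ - 1) * s p)

/-- `κ = 2/(γ−1)`. -/
def kap (γ : ℝ) : ℝ := 2 / (γ - 1)

/-- `Ω = (κ−1)/(κ+1) − tan²A`. -/
def Om (γ : ℝ) (A : ℝ × ℝ → ℝ) (p : ℝ × ℝ) : ℝ :=
  (kap γ - 1) / (kap γ + 1) - Real.tan (A p) ^ 2

private lemma aux_alg (γ ρ s q cs ss cA sA a1 a2 b1 b2 r1 r2 s1 s2 z1 z2 B1 B2 q1 q2 c1 c2 : ℝ)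
    (hρ0 : ρ ≠ 0) (hq0 : q ≠ 0)
    (h1 : q*cs*r1 + ρ*a1 + q*ss*r2 + ρ*b2 = 0)
    (h2 : γ*s*ρ*(q*cs*a1 + q*ss*a2) + q^2*sA^2*ρ*s1 + γ*s*(q^2*sA^2)*r1 = 0)
    (h3 : γ*s*ρ*(q*cs*b1 + q*ss*b2) + q^2*sA^2*ρ*s2 + γ*s*(q^2*sA^2)*r2 = 0)
    (h4 : q*cs*s1 + q*ss*s2 = 0)
    (h11 : a1 = q1*cs - q*ss*z1) (h12 : a2 = q2*cs - q*ss*z2)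
    (h13 : b1 = q1*ss + q*cs*z1) (h14 : b2 = q2*ss + q*cs*z2)
    (h15 : c1 = q1*sA + q*cA*B1) (h16 : c2 = q2*sA + q*cA*B2)
    (h19 : 2*q*sA*c1*ρ*s = q^2*sA^2*ρ*s1 + (γ-1)*s*(q^2*sA^2)*r1)
    (h20 : 2*q*sA*c2*ρ*s = q^2*sA^2*ρ*s2 + (γ-1)*s*(q^2*sA^2)*r2)
    (hgs : cs^2 + ss^2 = 1) (hgA : cA^2 + sA^2 = 1) :
    (γ*s*(γ-1)*cA*(q*sA)*((cs*cA-ss*sA)*(z1-B1) + (ss*cA+cs*sA)*(z2-B2)) = -(γ*s*(γ+1))*sA*((cs*cA-ss*sA)*c1 + (ss*cA+cs*sA)*c2) + γ*s*(γ-1)*(a2-b1)*sA^3 + (q*sA)*sA*((cs*cA-ss*sA)*s1 + (ss*cA+cs*sA)*s2)) ∧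
    (γ*s*(γ-1)*cA*(q*sA)*((cs*cA-ss*sA)*(z1+B1) + (ss*cA+cs*sA)*(z2+B2)) = -(γ*s*((3-γ)*sA*cA^2 - (γ+1)*sA^3))*((cs*cA-ss*sA)*c1 + (ss*cA+cs*sA)*c2) - γ*s*(γ-1)*(a2-b1)*sA^3 + (q*sA)*sA*(cA^2-sA^2)*((cs*cA-ss*sA)*s1 + (ss*cA+cs*sA)*s2)) ∧
    (γ*s*(γ-1)*cA*(q*sA)*((cs*cA+ss*sA)*(z1+B1) + (ss*cA-cs*sA)*(z2+B2)) = γ*s*(γ+1)*sA*((cs*cA+ss*sA)*c1 + (ss*cA-cs*sA)*c2) + γ*s*(γ-1)*(a2-b1)*sA^3 - (q*sA)*sA*((cs*cA+ss*sA)*s1 + (ss*cA-cs*sA)*s2)) ∧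
    (γ*s*(γ-1)*cA*(q*sA)*((cs*cA+ss*sA)*(z1-B1) + (ss*cA-cs*sA)*(z2-B2)) = γ*s*((3-γ)*sA*cA^2 - (γ+1)*sA^3)*((cs*cA+ss*sA)*c1 + (ss*cA-cs*sA)*c2) - γ*s*(γ-1)*(a2-b1)*sA^3 - (q*sA)*sA*(cA^2-sA^2)*((cs*cA+ss*sA)*s1 + (ss*cA-cs*sA)*s2)) := by
  have h4ρq : (4:ℝ)*ρ*q ≠ 0 := by simp [hρ0, hq0]
  refine ⟨?_, ?_, ?_, ?_⟩
  · apply mul_left_cancel₀ h4ρq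
    show (4*ρ*q)*(γ*s*(γ-1)*cA*(q*sA)*((cs*cA-ss*sA)*(z1-B1) + (ss*cA+cs*sA)*(z2-B2))) = (4*ρ*q)*(-(γ*s*(γ+1))*sA*((cs*cA-ss*sA)*c1 + (ss*cA+cs*sA)*c2) + γ*s*(γ-1)*(a2-b1)*sA^3 + (q*sA)*sA*((cs*cA-ss*sA)*s1 + (ss*cA+cs*sA)*s2))
    linear_combination (norm := ring1) ((-4)*γ*s*q*cA*sA^2 + 4*γ^2*s*q*cA*sA^2) * h1 + (4*ss*sA + (-4)*γ*ss*sA) * h2 + ((-4)*cs*sA + 4*γ*cs*sA) * h3 + ((-4)*ρ*q*cA*sA^2 + 4*γ*ρ*q*cA*sA^2) * h4 + (4*γ*ρ*s*q*cA*sA^2 + (-4)*γ*ρ*s*q*cs*ss*sA + (-4)*γ^2*ρ*s*q*cA*sA^2 + 4*γ^2*ρ*s*q*cs*ss*sA) * h11 + (4*γ*ρ*s*q*sA^3 + (-4)*γ*ρ*s*q*ss^2*sA + (-4)*γ^2*ρ*s*q*sA^3 + 4*γ^2*ρ*s*q*ss^2*sA) * h12 + (4*γ*ρ*s*q*sA +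 (-4)*γ*ρ*s*q*sA^3 + (-4)*γ*ρ*s*q*ss^2*sA + (-4)*γ^2*ρ*s*q*sA + 4*γ^2*ρ*s*q*sA^3 + 4*γ^2*ρ*s*q*ss^2*sA) * h13 + (4*γ*ρ*s*q*cA*sA^2 + 4*γ*ρ*s*q*cs*ss*sA + (-4)*γ^2*ρ*s*q*cA*sA^2 + (-4)*γ^2*ρ*s*q*cs*ss*sA) * h14 + (4*γ*ρ*s*q*ss*sA^2 + (-4)*γ*ρ*s*q*cs*cA*sA + (-4)*γ^2*ρ*s*q*ss*sA^2 + 4*γ^2*ρ*s*q*cs*cA*sA) * h15 + ((-4)*γ*ρ*s*q*ss*cA*sA + (-4)*γ*ρ*s*q*cs*sA^2 + 4*γ^2*ρ*s*q*ss*cA*sA + 4*γ^2*ρ*s*q*cs*sA^2) * h16 + ((-4)*γ*ss*sA + 4*γ*cs*cA) * h19 + (4*γ*ss*cA + 4*γ*cs*sA) * h20 + (-((-4)*γ*ρ*s*q*sA*b1 + 4*γ*ρ*s*q*ss*sA*q1 + (-4)*γ*ρ*s*q^2*ss*sA*z2 + 4*γ^2*ρ*s*q*sA*b1 + (-4)*γ^2*ρ*s*q*ss*sA*q1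 + 4*γ^2*ρ*s*q^2*ss*sA*z2)) * hgs + (-(4*γ*ρ*s*q^2*ss*sA*z2 + 4*γ*ρ*s*q^2*cs*sA*z1 + (-4)*γ^2*ρ*s*q^2*ss*sA*z2 + (-4)*γ^2*ρ*s*q^2*cs*sA*z1)) * hgA
  · apply mul_left_cancel₀ h4ρq
    show (4*ρ*q)*(γ*s*(γ-1)*cA*(q*sA)*((cs*cA-ss*sA)*(z1+B1) + (ss*cA+cs*sA)*(z2+B2))) = (4*ρ*q)*(-(γ*s*((3-γ)*sA*cA^2 - (γ+1)*sA^3))*((cs*cA-ss*sA)*c1 + (ss*cA+cs*sA)*c2) - γ*s*(γ-1)*(a2-b1)*sA^3 + (q*sA)*sA*(cA^2-sA^2)*((cs*cA-ss*sA)*s1 + (ss*cA+cs*sA)*s2))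
    linear_combination (norm := ring1) ((-4)*γ*s*q*cA*sA^2 + 4*γ^2*s*q*cA*sA^2) * h1 + (4*ss*sA + (-8)*ss*sA^3 + 8*cs*cA*sA^2 + (-4)*γ*ss*sA + 8*γ*ss*sA^3 + (-8)*γ*cs*cA*sA^2) * h2 + (8*ss*cA*sA^2 + (-4)*cs*sA + 8*cs*sA^3 + (-8)*γ*ss*cA*sA^2 + 4*γ*cs*sA + (-8)*γ*cs*sA^3) * h3 + ((-4)*ρ*q*cA*sA^2 + 4*γ*ρ*q*cA*sA^2) * h4 + ((-4)*γ*ρ*s*q*cA*sA^2 + 8*γ*ρ*s*q*ss^2*cA*sA^2 + (-4)*γ*ρ*s*q*cs*ss*sA + 8*γ*ρ*s*q*cs*ss*sA^3 + 4*γ^2*ρ*s*q*cA*sA^2 + (-8)*γ^2*ρ*s*q*ss^2*cA*sA^2 + 4*γ^2*ρ*s*q*cs*ss*sA + (-8)*γ^2*ρ*s*q*cs*ss*sA^3) * h11 + ((-4)*γ*ρ*s*q*sA^3 + (-4)*γ*ρ*s*q*ss^2*sA + 8*γ*ρ*s*q*ss^2*sA^3 + (-8)*γ*ρ*s*q*cs*ss*cA*sA^2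 + 4*γ^2*ρ*s*q*sA^3 + 4*γ^2*ρ*s*q*ss^2*sA + (-8)*γ^2*ρ*s*q*ss^2*sA^3 + 8*γ^2*ρ*s*q*cs*ss*cA*sA^2) * h12 + (4*γ*ρ*s*q*sA + (-4)*γ*ρ*s*q*sA^3 + (-4)*γ*ρ*s*q*ss^2*sA + 8*γ*ρ*s*q*ss^2*sA^3 + (-8)*γ*ρ*s*q*cs*ss*cA*sA^2 + (-4)*γ^2*ρ*s*q*sA + 4*γ^2*ρ*s*q*sA^3 + 4*γ^2*ρ*s*q*ss^2*sA + (-8)*γ^2*ρ*s*q*ss^2*sA^3 + 8*γ^2*ρ*s*q*cs*ss*cA*sA^2) * h13 + (4*γ*ρ*s*q*cA*sA^2 + (-8)*γ*ρ*s*q*ss^2*cA*sA^2 + 4*γ*ρ*s*q*cs*ss*sA + (-8)*γ*ρ*s*q*cs*ss*sA^3 + (-4)*γ^2*ρ*s*q*cA*sA^2 + 8*γ^2*ρ*s*q*ss^2*cA*sA^2 + (-4)*γ^2*ρ*s*q*cs*ss*sA + 8*γ^2*ρ*s*q*cs*ss*sA^3) * h14 + ((-4)*γ*ρ*s*q*ss*sA^2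 + 4*γ*ρ*s*q*cs*cA*sA + 4*γ^2*ρ*s*q*ss*sA^2 + (-4)*γ^2*ρ*s*q*cs*cA*sA) * h15 + (4*γ*ρ*s*q*ss*cA*sA + 4*γ*ρ*s*q*cs*sA^2 + (-4)*γ^2*ρ*s*q*ss*cA*sA + (-4)*γ^2*ρ*s*q*cs*sA^2) * h16 + ((-4)*γ*ss*sA + 8*γ*ss*sA^3 + 4*γ*cs*cA + (-8)*γ*cs*cA*sA^2) * h19 + (4*γ*ss*cA + (-8)*γ*ss*cA*sA^2 + 4*γ*cs*sA + (-8)*γ*cs*sA^3) * h20 + (-((-4)*γ*ρ*s*q*sA*b1 + 8*γ*ρ*s*q*sA^3*b1 + 8*γ*ρ*s*q*cA*sA^2*a1 + 4*γ*ρ*s*q*ss*sA*q1 + (-8)*γ*ρ*s*q*ss*sA^3*q1 + 8*γ*ρ*s*q*ss*cA*sA^2*q2 + (-4)*γ*ρ*s*q^2*ss*sA*z2 + 8*γ*ρ*s*q^2*ss*sA^3*z2 + 8*γ*ρ*s*q^2*ss*cA*sA^2*z1 + 4*γ^2*ρ*s*q*sA*b1 + (-8)*γ^2*ρ*s*q*sA^3*b1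 + (-8)*γ^2*ρ*s*q*cA*sA^2*a1 + (-4)*γ^2*ρ*s*q*ss*sA*q1 + 8*γ^2*ρ*s*q*ss*sA^3*q1 + (-8)*γ^2*ρ*s*q*ss*cA*sA^2*q2 + 4*γ^2*ρ*s*q^2*ss*sA*z2 + (-8)*γ^2*ρ*s*q^2*ss*sA^3*z2 + (-8)*γ^2*ρ*s*q^2*ss*cA*sA^2*z1)) * hgs + (-((-4)*ρ*q^2*ss*sA^3*s1 + 4*ρ*q^2*ss*cA*sA^2*s2 + 4*ρ*q^2*cs*sA^3*s2 + 4*ρ*q^2*cs*cA*sA^2*s1 + 12*γ*ρ*s*q*ss*sA^2*c1 + (-12)*γ*ρ*s*q*ss*cA*sA*c2 + (-12)*γ*ρ*s*q*cs*sA^2*c2 + (-12)*γ*ρ*s*q*cs*cA*sA*c1 + 4*γ*ρ*s*q^2*ss*sA*z2 + 4*γ*ρ*s*q^2*cs*sA*z1 + (-4)*γ^2*ρ*s*q*ss*sA^2*c1 + 4*γ^2*ρ*s*q*ss*cA*sA*c2 + 4*γ^2*ρ*s*q*cs*sA^2*c2 + 4*γ^2*ρ*s*q*cs*cA*sA*c1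 + (-4)*γ^2*ρ*s*q^2*ss*sA*z2 + (-4)*γ^2*ρ*s*q^2*cs*sA*z1)) * hgA
  · apply mul_left_cancel₀ h4ρq
    show (4*ρ*q)*(γ*s*(γ-1)*cA*(q*sA)*((cs*cA+ss*sA)*(z1+B1) + (ss*cA-cs*sA)*(z2+B2))) = (4*ρ*q)*(γ*s*(γ+1)*sA*((cs*cA+ss*sA)*c1 + (ss*cA-cs*sA)*c2) + γ*s*(γ-1)*(a2-b1)*sA^3 - (q*sA)*sA*((cs*cA+ss*sA)*s1 + (ss*cA-cs*sA)*s2))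
    linear_combination (norm := ring1) (4*γ*s*q*cA*sA^2 + (-4)*γ^2*s*q*cA*sA^2) * h1 + (4*ss*sA + (-4)*γ*ss*sA) * h2 + ((-4)*cs*sA + 4*γ*cs*sA) * h3 + (4*ρ*q*cA*sA^2 + (-4)*γ*ρ*q*cA*sA^2) * h4 + ((-4)*γ*ρ*s*q*cA*sA^2 + (-4)*γ*ρ*s*q*cs*ss*sA + 4*γ^2*ρ*s*q*cA*sA^2 + 4*γ^2*ρ*s*q*cs*ss*sA) * h11 + (4*γ*ρ*s*q*sA^3 + (-4)*γ*ρ*s*q*ss^2*sA + (-4)*γ^2*ρ*s*q*sA^3 + 4*γ^2*ρ*s*q*ss^2*sA) * h12 + (4*γ*ρ*s*q*sA + (-4)*γ*ρ*s*q*sA^3 + (-4)*γ*ρ*s*q*ss^2*sA + (-4)*γ^2*ρ*s*q*sA + 4*γ^2*ρ*s*q*sA^3 + 4*γ^2*ρ*s*q*ss^2*sA) * h13 + ((-4)*γ*ρ*s*q*cA*sA^2 + 4*γ*ρ*s*q*cs*ss*sA + 4*γ^2*ρ*s*q*cA*sA^2 + (-4)*γ^2*ρ*s*q*cs*ss*sA)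 * h14 + (4*γ*ρ*s*q*ss*sA^2 + 4*γ*ρ*s*q*cs*cA*sA + (-4)*γ^2*ρ*s*q*ss*sA^2 + (-4)*γ^2*ρ*s*q*cs*cA*sA) * h15 + (4*γ*ρ*s*q*ss*cA*sA + (-4)*γ*ρ*s*q*cs*sA^2 + (-4)*γ^2*ρ*s*q*ss*cA*sA + 4*γ^2*ρ*s*q*cs*sA^2) * h16 + ((-4)*γ*ss*sA + (-4)*γ*cs*cA) * h19 + ((-4)*γ*ss*cA + 4*γ*cs*sA) * h20 + (-((-4)*γ*ρ*s*q*sA*b1 + 4*γ*ρ*s*q*ss*sA*q1 + (-4)*γ*ρ*s*q^2*ss*sA*z2 + 4*γ^2*ρ*s*q*sA*b1 + (-4)*γ^2*ρ*s*q*ss*sA*q1 + 4*γ^2*ρ*s*q^2*ss*sA*z2)) * hgs + (-(4*γ*ρ*s*q^2*ss*sA*z2 + 4*γ*ρ*s*q^2*cs*sA*z1 + (-4)*γ^2*ρ*s*q^2*ss*sA*z2 + (-4)*γ^2*ρ*s*q^2*cs*sA*z1)) * hgA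
  · apply mul_left_cancel₀ h4ρq
    show (4*ρ*q)*(γ*s*(γ-1)*cA*(q*sA)*((cs*cA+ss*sA)*(z1-B1) + (ss*cA-cs*sA)*(z2-B2))) = (4*ρ*q)*(γ*s*((3-γ)*sA*cA^2 - (γ+1)*sA^3)*((cs*cA+ss*sA)*c1 + (ss*cA-cs*sA)*c2) - γ*s*(γ-1)*(a2-b1)*sA^3 - (q*sA)*sA*(cA^2-sA^2)*((cs*cA+ss*sA)*s1 + (ss*cA-cs*sA)*s2))
    linear_combination (norm := ring1) (4*γ*s*q*cA*sA^2 + (-4)*γ^2*s*q*cA*sA^2) * h1 + (4*ss*sA + (-8)*ss*sA^3 + (-8)*cs*cA*sA^2 + (-4)*γ*ss*sA + 8*γ*ss*sA^3 + 8*γ*cs*cA*sA^2) * h2 + ((-8)*ss*cA*sA^2 + (-4)*cs*sA + 8*cs*sA^3 + 8*γ*ss*cA*sA^2 + 4*γ*cs*sA + (-8)*γ*cs*sA^3) * h3 + (4*ρ*q*cA*sA^2 + (-4)*γ*ρ*q*cA*sA^2) * h4 + (4*γ*ρ*s*q*cA*sA^2 + (-8)*γ*ρ*s*q*ss^2*cA*sA^2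 + (-4)*γ*ρ*s*q*cs*ss*sA + 8*γ*ρ*s*q*cs*ss*sA^3 + (-4)*γ^2*ρ*s*q*cA*sA^2 + 8*γ^2*ρ*s*q*ss^2*cA*sA^2 + 4*γ^2*ρ*s*q*cs*ss*sA + (-8)*γ^2*ρ*s*q*cs*ss*sA^3) * h11 + ((-4)*γ*ρ*s*q*sA^3 + (-4)*γ*ρ*s*q*ss^2*sA + 8*γ*ρ*s*q*ss^2*sA^3 + 8*γ*ρ*s*q*cs*ss*cA*sA^2 + 4*γ^2*ρ*s*q*sA^3 + 4*γ^2*ρ*s*q*ss^2*sA + (-8)*γ^2*ρ*s*q*ss^2*sA^3 + (-8)*γ^2*ρ*s*q*cs*ss*cA*sA^2) * h12 + (4*γ*ρ*s*q*sA + (-4)*γ*ρ*s*q*sA^3 + (-4)*γ*ρ*s*q*ss^2*sA + 8*γ*ρ*s*q*ss^2*sA^3 + 8*γ*ρ*s*q*cs*ss*cA*sA^2 + (-4)*γ^2*ρ*s*q*sA + 4*γ^2*ρ*s*q*sA^3 + 4*γ^2*ρ*s*q*ss^2*sA + (-8)*γ^2*ρ*s*q*ss^2*sA^3 + (-8)*γ^2*ρ*s*q*cs*ss*cA*sA^2)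 * h13 + ((-4)*γ*ρ*s*q*cA*sA^2 + 8*γ*ρ*s*q*ss^2*cA*sA^2 + 4*γ*ρ*s*q*cs*ss*sA + (-8)*γ*ρ*s*q*cs*ss*sA^3 + 4*γ^2*ρ*s*q*cA*sA^2 + (-8)*γ^2*ρ*s*q*ss^2*cA*sA^2 + (-4)*γ^2*ρ*s*q*cs*ss*sA + 8*γ^2*ρ*s*q*cs*ss*sA^3) * h14 + ((-4)*γ*ρ*s*q*ss*sA^2 + (-4)*γ*ρ*s*q*cs*cA*sA + 4*γ^2*ρ*s*q*ss*sA^2 + 4*γ^2*ρ*s*q*cs*cA*sA) * h15 + ((-4)*γ*ρ*s*q*ss*cA*sA + 4*γ*ρ*s*q*cs*sA^2 + 4*γ^2*ρ*s*q*ss*cA*sA + (-4)*γ^2*ρ*s*q*cs*sA^2) * h16 + ((-4)*γ*ss*sA + 8*γ*ss*sA^3 + (-4)*γ*cs*cA + 8*γ*cs*cA*sA^2) * h19 + ((-4)*γ*ss*cA + 8*γ*ss*cA*sA^2 + 4*γ*cs*sA + (-8)*γ*cs*sA^3) * h20 + (-((-4)*γ*ρ*s*q*sA*b1 + 8*γ*ρ*s*q*sA^3*b1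 + (-8)*γ*ρ*s*q*cA*sA^2*a1 + 4*γ*ρ*s*q*ss*sA*q1 + (-8)*γ*ρ*s*q*ss*sA^3*q1 + (-8)*γ*ρ*s*q*ss*cA*sA^2*q2 + (-4)*γ*ρ*s*q^2*ss*sA*z2 + 8*γ*ρ*s*q^2*ss*sA^3*z2 + (-8)*γ*ρ*s*q^2*ss*cA*sA^2*z1 + 4*γ^2*ρ*s*q*sA*b1 + (-8)*γ^2*ρ*s*q*sA^3*b1 + 8*γ^2*ρ*s*q*cA*sA^2*a1 + (-4)*γ^2*ρ*s*q*ss*sA*q1 + 8*γ^2*ρ*s*q*ss*sA^3*q1 + 8*γ^2*ρ*s*q*ss*cA*sA^2*q2 + 4*γ^2*ρ*s*q^2*ss*sA*z2 + (-8)*γ^2*ρ*s*q^2*ss*sA^3*z2 + 8*γ^2*ρ*s*q^2*ss*cA*sA^2*z1)) * hgs + (-((-4)*ρ*q^2*ss*sA^3*s1 + (-4)*ρ*q^2*ss*cA*sA^2*s2 + 4*ρ*q^2*cs*sA^3*s2 + (-4)*ρ*q^2*cs*cA*sA^2*s1 + 12*γ*ρ*s*q*ss*sA^2*c1 + 12*γ*ρ*s*q*ss*cA*sA*c2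 + (-12)*γ*ρ*s*q*cs*sA^2*c2 + 12*γ*ρ*s*q*cs*cA*sA*c1 + 4*γ*ρ*s*q^2*ss*sA*z2 + 4*γ*ρ*s*q^2*cs*sA*z1 + (-4)*γ^2*ρ*s*q*ss*sA^2*c1 + (-4)*γ^2*ρ*s*q*ss*cA*sA*c2 + 4*γ^2*ρ*s*q*cs*sA^2*c2 + (-4)*γ^2*ρ*s*q*cs*cA*sA*c1 + (-4)*γ^2*ρ*s*q^2*ss*sA*z2 + (-4)*γ^2*ρ*s*q^2*cs*sA*z1)) * hgA

set_option maxHeartbeats 2000000 in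
/-- characteristic equations for the characteristic angles `α`, `β`. -/
theorem stmt_5 (γ : ℝ) (hγ : 1 < γ) (U : Set (ℝ × ℝ)) (hU : IsOpen U)
    (u v ρ s σ A : ℝ × ℝ → ℝ)
    (hu : ContDiffOn ℝ 1 u U) (hv : ContDiffOn ℝ 1 v U)
    (hρ : ContDiffOn ℝ 1 ρ U) (hs : ContDiffOn ℝ 1 s U)
    (hσ : ContDiffOn ℝ 1 σ U) (hA : ContDiffOn ℝ 1 A U)
    (hρpos : ∀ p ∈ U, 0 < ρ p) (hspos : ∀ p ∈ U, 0 < s p)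
    (hmass : ∀ p ∈ U, pdx (fun q => ρ q * u q) p + pdy (fun q => ρ q * v q) p = 0)
    (hmomx : ∀ p ∈ U,
      u p * pdx u p + v p * pdy u p + (ρ p)⁻¹ * pdx (fun q => s q * ρ q ^ γ) p = 0)
    (hmomy : ∀ p ∈ U,
      u p * pdx v p + v p * pdy v p + (ρ p)⁻¹ * pdy (fun q => s q * ρ q ^ γ) p = 0)
    (hent : ∀ p ∈ U, u p * pdx s p + v p * pdy s p = 0)
    (hsup : ∀ p ∈ U, (sound γ ρ s p) ^ 2 < u p ^ 2 + v p ^ 2)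
    (huσ : ∀ p ∈ U, u p = speed u v p * Real.cos (σ p))
    (hvσ : ∀ p ∈ U, v p = speed u v p * Real.sin (σ p))
    (hsinA : ∀ p ∈ U, Real.sin (A p) = sound γ ρ s p / speed u v p)
    (hA0 : ∀ p ∈ U, 0 < A p) (hA2 : ∀ p ∈ U, A p < Real.pi / 2)
    :
    ∀ p ∈ U,
      (sound γ ρ s p * dd (fun q => σ q + A q) (fun q => σ q - A q) p =
        -(1 + kap γ) * Real.tan (A p) * dd (fun q => σ q + A q) (sound γ ρ s) p +
        vort u v p * Real.sin (A p) ^ 2 * Real.tan (A p) +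
        jay γ ρ s p * Real.tan (A p) * dd (fun q => σ q + A q) s p) ∧
      (sound γ ρ s p * dd (fun q => σ q + A q) (fun q => σ q + A q) p =
        -((1 + kap γ) / 2) * Om γ A p * Real.sin (2 * A p) *
          dd (fun q => σ q + A q) (sound γ ρ s) p -
        vort u v p * Real.sin (A p) ^ 2 * Real.tan (A p) +
        jay γ ρ s p * Real.tan (A p) * Real.cos (2 * A p) * dd (fun q => σ q + A q) s p) ∧
      (sound γ ρ s p * dd (fun q => σ q - A q) (fun q => σ q + A q) p =
        (1 + kap γ) * Real.tan (A p) * dd (fun q => σ q - A q) (sound γ ρ s) p +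
        vort u v p * Real.sin (A p) ^ 2 * Real.tan (A p) -
        jay γ ρ s p * Real.tan (A p) * dd (fun q => σ q - A q) s p) ∧
      (sound γ ρ s p * dd (fun q => σ q - A q) (fun q => σ q - A q) p =
        ((1 + kap γ) / 2) * Om γ A p * Real.sin (2 * A p) *
          dd (fun q => σ q - A q) (sound γ ρ s) p -
        vort u v p * Real.sin (A p) ^ 2 * Real.tan (A p) -
        jay γ ρ s p * Real.tan (A p) * Real.cos (2 * A p) * dd (fun q => σ q - A q) s p) := by
  intro p hp
  have hUp : U ∈ nhds p := hU.mem_nhds hp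
  have hρp := hρpos p hp
  have hsp := hspos p hp
  have hρne : ρ p ≠ 0 := ne_of_gt hρp
  have hsne : s p ≠ 0 := ne_of_gt hsp
  have hγ0 : (0:ℝ) < γ := by linarith
  have hγ1 : γ - 1 ≠ 0 := ne_of_gt (by linarith)
  have hγne : γ ≠ 0 := ne_of_gt hγ0
  have hud : DifferentiableAt ℝ u p := (hu.differentiableOn one_ne_zero).differentiableAt hUp
  have hvd : DifferentiableAt ℝ v p := (hv.differentiableOn one_ne_zero).differentiableAt hUp
  have hρd : DifferentiableAt ℝ ρ p := (hρ.differentiableOn one_ne_zero).differentiableAt hUp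
  have hsd : DifferentiableAt ℝ s p := (hs.differentiableOn one_ne_zero).differentiableAt hUp
  have hσd : DifferentiableAt ℝ σ p := (hσ.differentiableOn one_ne_zero).differentiableAt hUp
  have hAd : DifferentiableAt ℝ A p := (hA.differentiableOn one_ne_zero).differentiableAt hUp
  have hu' := hud.hasFDerivAt
  have hv' := hvd.hasFDerivAt
  have hρ' := hρd.hasFDerivAt
  have hs' := hsd.hasFDerivAt
  have hσ' := hσd.hasFDerivAt
  have hA' := hAd.hasFDerivAt
  have hcpos : 0 < sound γ ρ s p := by
    simp only [sound]; exact Real.sqrt_pos.mpr (by positivity)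
  have hq2 : 0 < u p ^ 2 + v p ^ 2 := lt_of_le_of_lt (sq_nonneg _) (hsup p hp)
  have hqpos : 0 < speed u v p := by
    simp only [speed]; exact Real.sqrt_pos.mpr hq2
  have hqne := ne_of_gt hqpos
  have hsApos : 0 < Real.sin (A p) := Real.sin_pos_of_pos_of_lt_pi (hA0 p hp) (by linarith [hA2 p hp, Real.pi_pos])
  have hcApos : 0 < Real.cos (A p) := Real.cos_pos_of_mem_Ioo ⟨by linarith [hA0 p hp, Real.pi_pos], hA2 p hp⟩
  have hcAne := ne_of_gt hcApos
  have hcq : sound γ ρ s p = speed u v p * Real.sin (A p) := by rw [hsinA p hp]; field_simp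
  have hc2 : sound γ ρ s p ^ 2 = γ * s p * ρ p ^ (γ-1) := by
    simp only [sound]; exact Real.sq_sqrt (by positivity)
  have hK2 : ρ p ^ (γ-1) = ρ p ^ (γ-1-1) * ρ p := by
    conv_lhs => rw [show γ-1 = (γ-1-1)+1 by ring, Real.rpow_add_one hρne]
  have hPK : ρ p ^ γ = ρ p ^ (γ-1) * ρ p := by
    conv_lhs => rw [show γ = (γ-1)+1 by ring, Real.rpow_add_one hρne]
  have hqposU : ∀ z ∈ U, 0 < speed u v z := fun z hz => by
    simp only [speed]; exact Real.sqrt_pos.mpr (lt_of_le_of_lt (sq_nonneg _) (hsup z hz))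
  have hQd : DifferentiableAt ℝ (speed u v) p := by
    have h1 : DifferentiableAt ℝ (fun z => u z ^ 2 + v z ^ 2) p := (hud.pow 2).add (hvd.pow 2)
    exact h1.sqrt (ne_of_gt hq2)
  have hq' : HasFDerivAt (speed u v) (fderiv ℝ (speed u v) p) p := hQd.hasFDerivAt
  have hsound_ev : sound γ ρ s =ᶠ[nhds p] fun z => speed u v z * Real.sin (A z) :=
    Filter.eventuallyEq_of_mem hUp (fun z hz => by rw [hsinA z hz]; field_simp [ne_of_gt (hqposU z hz)])
  have hCd : DifferentiableAt ℝ (sound γ ρ s) p :=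
    (hQd.mul hAd.sin).congr_of_eventuallyEq hsound_ev
  have hc' := hCd.hasFDerivAt
  have hfu : fderiv ℝ u p = speed u v p • (-Real.sin (σ p) • fderiv ℝ σ p) + Real.cos (σ p) • fderiv ℝ (speed u v) p := by
    have hev : u =ᶠ[nhds p] fun z => speed u v z * Real.cos (σ z) :=
      Filter.eventuallyEq_of_mem hUp (fun z hz => huσ z hz)
    rw [hev.fderiv_eq, HasFDerivAt.fderiv (f := fun z => speed u v z * Real.cos (σ z)) (hq'.mul hσ'.cos)]
  have hfv : fderiv ℝ v p = speed u v p • (Real.cos (σ p) • fderiv ℝ σ p) + Real.sin (σ p) • fderiv ℝ (speed u v) p := by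
    have hev : v =ᶠ[nhds p] fun z => speed u v z * Real.sin (σ z) :=
      Filter.eventuallyEq_of_mem hUp (fun z hz => hvσ z hz)
    rw [hev.fderiv_eq, HasFDerivAt.fderiv (f := fun z => speed u v z * Real.sin (σ z)) (hq'.mul hσ'.sin)]
  have hfc : fderiv ℝ (sound γ ρ s) p = speed u v p • (Real.cos (A p) • fderiv ℝ A p) + Real.sin (A p) • fderiv ℝ (speed u v) p := by
    rw [hsound_ev.fderiv_eq, HasFDerivAt.fderiv (f := fun z => speed u v z * Real.sin (A z)) (hq'.mul hA'.sin)]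
  have h11 : fderiv ℝ u p (1, 0) = fderiv ℝ (speed u v) p (1, 0)*Real.cos (σ p) - speed u v p*Real.sin (σ p)*fderiv ℝ σ p (1, 0) := by
    rw [hfu]; simp only [ContinuousLinearMap.add_apply, ContinuousLinearMap.coe_smul', Pi.smul_apply, smul_eq_mul, ContinuousLinearMap.sub_apply, ContinuousLinearMap.neg_apply, neg_smul, Pi.neg_apply]; ring
  have h12 : fderiv ℝ u p (0, 1) = fderiv ℝ (speed u v) p (0, 1)*Real.cos (σ p) - speed u v p*Real.sin (σ p)*fderiv ℝ σ p (0, 1) := by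
    rw [hfu]; simp only [ContinuousLinearMap.add_apply, ContinuousLinearMap.coe_smul', Pi.smul_apply, smul_eq_mul, ContinuousLinearMap.sub_apply, ContinuousLinearMap.neg_apply, neg_smul, Pi.neg_apply]; ring
  have h13 : fderiv ℝ v p (1, 0) = fderiv ℝ (speed u v) p (1, 0)*Real.sin (σ p) + speed u v p*Real.cos (σ p)*fderiv ℝ σ p (1, 0) := by
    rw [hfv]; simp only [ContinuousLinearMap.add_apply, ContinuousLinearMap.coe_smul', Pi.smul_apply, smul_eq_mul, ContinuousLinearMap.sub_apply, ContinuousLinearMap.neg_apply, neg_smul, Pi.neg_apply]; ring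
  have h14 : fderiv ℝ v p (0, 1) = fderiv ℝ (speed u v) p (0, 1)*Real.sin (σ p) + speed u v p*Real.cos (σ p)*fderiv ℝ σ p (0, 1) := by
    rw [hfv]; simp only [ContinuousLinearMap.add_apply, ContinuousLinearMap.coe_smul', Pi.smul_apply, smul_eq_mul, ContinuousLinearMap.sub_apply, ContinuousLinearMap.neg_apply, neg_smul, Pi.neg_apply]; ring
  have h15 : fderiv ℝ (sound γ ρ s) p (1, 0) = fderiv ℝ (speed u v) p (1, 0)*Real.sin (A p) + speed u v p*Real.cos (A p)*fderiv ℝ A p (1, 0) := by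
    rw [hfc]; simp only [ContinuousLinearMap.add_apply, ContinuousLinearMap.coe_smul', Pi.smul_apply, smul_eq_mul, ContinuousLinearMap.sub_apply, ContinuousLinearMap.neg_apply, neg_smul, Pi.neg_apply]; ring
  have h16 : fderiv ℝ (sound γ ρ s) p (0, 1) = fderiv ℝ (speed u v) p (0, 1)*Real.sin (A p) + speed u v p*Real.cos (A p)*fderiv ℝ A p (0, 1) := by
    rw [hfc]; simp only [ContinuousLinearMap.add_apply, ContinuousLinearMap.coe_smul', Pi.smul_apply, smul_eq_mul, ContinuousLinearMap.sub_apply, ContinuousLinearMap.neg_apply, neg_smul, Pi.neg_apply]; ring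
  have hm := hmass p hp
  simp only [pdx, pdy] at hm
  rw [HasFDerivAt.fderiv (f := fun q => ρ q * u q) (hρ'.mul hu'), HasFDerivAt.fderiv (f := fun q => ρ q * v q) (hρ'.mul hv')] at hm
  simp only [ContinuousLinearMap.add_apply, ContinuousLinearMap.coe_smul', Pi.smul_apply, smul_eq_mul, ContinuousLinearMap.sub_apply, ContinuousLinearMap.neg_apply, neg_smul, Pi.neg_apply] at hm
  have h1 : speed u v p*Real.cos (σ p)*(fderiv ℝ ρ p (1, 0)) + ρ p*(fderiv ℝ u p (1, 0)) + speed u v p*Real.sin (σ p)*(fderiv ℝ ρ p (0, 1)) + ρ p*(fderiv ℝ v p (0, 1)) = 0 := by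
    linear_combination hm - (fderiv ℝ ρ p (1, 0))*(huσ p hp) - (fderiv ℝ ρ p (0, 1))*(hvσ p hp)
  have h4 : speed u v p*Real.cos (σ p)*(fderiv ℝ s p (1, 0)) + speed u v p*Real.sin (σ p)*(fderiv ℝ s p (0, 1)) = 0 := by
    have he := hent p hp
    simp only [pdx, pdy] at he
    linear_combination he - (fderiv ℝ s p (1, 0))*(huσ p hp) - (fderiv ℝ s p (0, 1))*(hvσ p hp)
  have hinv : ρ p * (ρ p)⁻¹ = 1 := mul_inv_cancel₀ hρne
  have hmx := hmomx p hp
  simp only [pdx, pdy] at hmx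
  rw [HasFDerivAt.fderiv (f := fun q => s q * ρ q ^ γ) (hs'.mul (hρ'.rpow_const (Or.inl hρne)))] at hmx
  simp only [ContinuousLinearMap.add_apply, ContinuousLinearMap.coe_smul', Pi.smul_apply, smul_eq_mul, ContinuousLinearMap.sub_apply, ContinuousLinearMap.neg_apply, neg_smul, Pi.neg_apply] at hmx
  have hmx' : ρ p*(u p*(fderiv ℝ u p (1, 0))) + ρ p*(v p*(fderiv ℝ u p (0, 1))) + s p*(γ*ρ p ^ (γ-1))*(fderiv ℝ ρ p (1, 0)) + ρ p ^ γ*(fderiv ℝ s p (1, 0)) = 0 := by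
    linear_combination (ρ p)*hmx - (s p*(γ*ρ p ^ (γ-1))*(fderiv ℝ ρ p (1, 0)) + ρ p ^ γ*(fderiv ℝ s p (1, 0)))*hinv
  have hmy := hmomy p hp
  simp only [pdx, pdy] at hmy
  rw [HasFDerivAt.fderiv (f := fun q => s q * ρ q ^ γ) (hs'.mul (hρ'.rpow_const (Or.inl hρne)))] at hmy
  simp only [ContinuousLinearMap.add_apply, ContinuousLinearMap.coe_smul', Pi.smul_apply, smul_eq_mul, ContinuousLinearMap.sub_apply, ContinuousLinearMap.neg_apply, neg_smul, Pi.neg_apply] at hmy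
  have hmy' : ρ p*(u p*(fderiv ℝ v p (1, 0))) + ρ p*(v p*(fderiv ℝ v p (0, 1))) + s p*(γ*ρ p ^ (γ-1))*(fderiv ℝ ρ p (0, 1)) + ρ p ^ γ*(fderiv ℝ s p (0, 1)) = 0 := by
    linear_combination (ρ p)*hmy - (s p*(γ*ρ p ^ (γ-1))*(fderiv ℝ ρ p (0, 1)) + ρ p ^ γ*(fderiv ℝ s p (0, 1)))*hinv
  have h2 : γ*s p*ρ p*(speed u v p*Real.cos (σ p)*(fderiv ℝ u p (1, 0)) + speed u v p*Real.sin (σ p)*(fderiv ℝ u p (0, 1))) + speed u v p^2*Real.sin (A p)^2*ρ p*(fderiv ℝ s p (1, 0)) + γ*s p*(speed u v p^2*Real.sin (A p)^2)*(fderiv ℝ ρ p (1, 0)) = 0 := by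
    linear_combination γ*s p*hmx' - γ*s p*ρ p*(fderiv ℝ u p (1, 0))*(huσ p hp) - γ*s p*ρ p*(fderiv ℝ u p (0, 1))*(hvσ p hp) + (fderiv ℝ s p (1, 0))*(-(ρ p*(sound γ ρ s p+speed u v p*Real.sin (A p)))*hcq + ρ p*hc2 - γ*s p*hPK) + γ*s p*(fderiv ℝ ρ p (1, 0))*(-(sound γ ρ s p+speed u v p*Real.sin (A p))*hcq + hc2)
  have h3 : γ*s p*ρ p*(speed u v p*Real.cos (σ p)*(fderiv ℝ v p (1, 0)) + speed u v p*Real.sin (σ p)*(fderiv ℝ v p (0, 1))) + speed u v p^2*Real.sin (A p)^2*ρ p*(fderiv ℝ s p (0, 1)) + γ*s p*(speed u v p^2*Real.sin (A p)^2)*(fderiv ℝ ρ p (0, 1)) = 0 := by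
    linear_combination γ*s p*hmy' - γ*s p*ρ p*(fderiv ℝ v p (1, 0))*(huσ p hp) - γ*s p*ρ p*(fderiv ℝ v p (0, 1))*(hvσ p hp) + (fderiv ℝ s p (0, 1))*(-(ρ p*(sound γ ρ s p+speed u v p*Real.sin (A p)))*hcq + ρ p*hc2 - γ*s p*hPK) + γ*s p*(fderiv ℝ ρ p (0, 1))*(-(sound γ ρ s p+speed u v p*Real.sin (A p))*hcq + hc2)
  have hsq_ev : (fun z => sound γ ρ s z * sound γ ρ s z) =ᶠ[nhds p] fun z => γ * (s z * ρ z ^ (γ-1)) :=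
    Filter.eventuallyEq_of_mem hUp (fun z hz => by
      simp only [sound]
      rw [Real.mul_self_sqrt (le_of_lt (mul_pos (mul_pos hγ0 (hspos z hz)) (Real.rpow_pos_of_pos (hρpos z hz) _)))]
      ring)
  have hw' : HasFDerivAt (fun z => γ * (s z * ρ z ^ (γ-1)))
      (γ • (s p • ((γ-1) * ρ p ^ (γ-1-1)) • fderiv ℝ ρ p + (ρ p ^ (γ-1)) • fderiv ℝ s p)) p :=
    (hs'.mul (hρ'.rpow_const (Or.inl hρne))).const_mul γ
  have hccfd : fderiv ℝ (fun z => sound γ ρ s z * sound γ ρ s z) p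
      = fderiv ℝ (fun z => γ * (s z * ρ z ^ (γ-1))) p := hsq_ev.fderiv_eq
  rw [HasFDerivAt.fderiv (f := fun z => sound γ ρ s z * sound γ ρ s z) (hc'.mul hc'), hw'.fderiv] at hccfd
  have h19x : sound γ ρ s p*(fderiv ℝ (sound γ ρ s) p (1, 0)) + sound γ ρ s p*(fderiv ℝ (sound γ ρ s) p (1, 0)) = γ*(s p*((γ-1)*ρ p ^ (γ-1-1)*(fderiv ℝ ρ p (1, 0))) + ρ p ^ (γ-1)*(fderiv ℝ s p (1, 0))) := by
    have e2 := congrArg (fun (L : (ℝ×ℝ) →L[ℝ] ℝ) => L (1, 0)) hccfd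
    simp only [ContinuousLinearMap.add_apply, ContinuousLinearMap.coe_smul', Pi.smul_apply, smul_eq_mul, ContinuousLinearMap.sub_apply, ContinuousLinearMap.neg_apply, neg_smul, Pi.neg_apply] at e2
    linear_combination e2
  have h20x : sound γ ρ s p*(fderiv ℝ (sound γ ρ s) p (0, 1)) + sound γ ρ s p*(fderiv ℝ (sound γ ρ s) p (0, 1)) = γ*(s p*((γ-1)*ρ p ^ (γ-1-1)*(fderiv ℝ ρ p (0, 1))) + ρ p ^ (γ-1)*(fderiv ℝ s p (0, 1))) := by
    have e2 := congrArg (fun (L : (ℝ×ℝ) →L[ℝ] ℝ) => L (0, 1)) hccfd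
    simp only [ContinuousLinearMap.add_apply, ContinuousLinearMap.coe_smul', Pi.smul_apply, smul_eq_mul, ContinuousLinearMap.sub_apply, ContinuousLinearMap.neg_apply, neg_smul, Pi.neg_apply] at e2
    linear_combination e2
  have h19 : 2*speed u v p*Real.sin (A p)*(fderiv ℝ (sound γ ρ s) p (1, 0))*ρ p*s p = speed u v p^2*Real.sin (A p)^2*ρ p*(fderiv ℝ s p (1, 0)) + (γ-1)*s p*(speed u v p^2*Real.sin (A p)^2)*(fderiv ℝ ρ p (1, 0)) := by
    linear_combination (ρ p*s p)*h19x - 2*(ρ p*s p*(fderiv ℝ (sound γ ρ s) p (1, 0)))*hcq - (ρ p*(fderiv ℝ s p (1, 0)))*(hc2 - (sound γ ρ s p+speed u v p*Real.sin (A p))*hcq) - ((γ-1)*s p*(fderiv ℝ ρ p (1, 0)))*((hc2 - (sound γ ρ s p+speed u v p*Real.sin (A p))*hcq) + γ*s p*hK2)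
  have h20 : 2*speed u v p*Real.sin (A p)*(fderiv ℝ (sound γ ρ s) p (0, 1))*ρ p*s p = speed u v p^2*Real.sin (A p)^2*ρ p*(fderiv ℝ s p (0, 1)) + (γ-1)*s p*(speed u v p^2*Real.sin (A p)^2)*(fderiv ℝ ρ p (0, 1)) := by
    linear_combination (ρ p*s p)*h20x - 2*(ρ p*s p*(fderiv ℝ (sound γ ρ s) p (0, 1)))*hcq - (ρ p*(fderiv ℝ s p (0, 1)))*(hc2 - (sound γ ρ s p+speed u v p*Real.sin (A p))*hcq) - ((γ-1)*s p*(fderiv ℝ ρ p (0, 1)))*((hc2 - (sound γ ρ s p+speed u v p*Real.sin (A p))*hcq) + γ*s p*hK2)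
  have hgs : Real.cos (σ p)^2 + Real.sin (σ p)^2 = 1 := Real.cos_sq_add_sin_sq (σ p)
  have hgA : Real.cos (A p)^2 + Real.sin (A p)^2 = 1 := Real.cos_sq_add_sin_sq (A p)
  obtain ⟨k1, k2, k3, k4⟩ := aux_alg γ (ρ p) (s p) (speed u v p) (Real.cos (σ p)) (Real.sin (σ p)) (Real.cos (A p)) (Real.sin (A p))
    (fderiv ℝ u p (1, 0)) (fderiv ℝ u p (0, 1)) (fderiv ℝ v p (1, 0)) (fderiv ℝ v p (0, 1)) (fderiv ℝ ρ p (1, 0)) (fderiv ℝ ρ p (0, 1)) (fderiv ℝ s p (1, 0)) (fderiv ℝ s p (0, 1)) (fderiv ℝ σ p (1, 0)) (fderiv ℝ σ p (0, 1)) (fderiv ℝ A p (1, 0)) (fderiv ℝ A p (0, 1))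
    (fderiv ℝ (speed u v) p (1, 0)) (fderiv ℝ (speed u v) p (0, 1)) (fderiv ℝ (sound γ ρ s) p (1, 0)) (fderiv ℝ (sound γ ρ s) p (0, 1)) hρne hqne h1 h2 h3 h4 h11 h12 h13 h14 h15 h16 h19 h20 hgs hgA
  have hfadd : fderiv ℝ (fun z => σ z + A z) p = fderiv ℝ σ p + fderiv ℝ A p := (hσ'.add hA').fderiv
  have hfsub : fderiv ℝ (fun z => σ z - A z) p = fderiv ℝ σ p - fderiv ℝ A p := (hσ'.sub hA').fderiv
  have hddab : dd (fun q => σ q + A q) (fun q => σ q - A q) p = (Real.cos (σ p)*Real.cos (A p) - Real.sin (σ p)*Real.sin (A p))*(fderiv ℝ σ p (1, 0) - fderiv ℝ A p (1, 0)) + (Real.sin (σ p)*Real.cos (A p) + Real.cos (σ p)*Real.sin (A p))*(fderiv ℝ σ p (0, 1) - fderiv ℝ A p (0, 1)) := by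
    simp only [dd, pdx, pdy, hfadd, hfsub]
    rw [Real.cos_add, Real.sin_add]
    try simp only [ContinuousLinearMap.add_apply, ContinuousLinearMap.coe_smul', Pi.smul_apply, smul_eq_mul, ContinuousLinearMap.sub_apply, ContinuousLinearMap.neg_apply, neg_smul, Pi.neg_apply]
    try ring
  have hddaa : dd (fun q => σ q + A q) (fun q => σ q + A q) p = (Real.cos (σ p)*Real.cos (A p) - Real.sin (σ p)*Real.sin (A p))*(fderiv ℝ σ p (1, 0) + fderiv ℝ A p (1, 0)) + (Real.sin (σ p)*Real.cos (A p) + Real.cos (σ p)*Real.sin (A p))*(fderiv ℝ σ p (0, 1) + fderiv ℝ A p (0, 1)) := by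
    simp only [dd, pdx, pdy, hfadd]
    rw [Real.cos_add, Real.sin_add]
    try simp only [ContinuousLinearMap.add_apply, ContinuousLinearMap.coe_smul', Pi.smul_apply, smul_eq_mul, ContinuousLinearMap.sub_apply, ContinuousLinearMap.neg_apply, neg_smul, Pi.neg_apply]
    try ring
  have hddba : dd (fun q => σ q - A q) (fun q => σ q + A q) p = (Real.cos (σ p)*Real.cos (A p) + Real.sin (σ p)*Real.sin (A p))*(fderiv ℝ σ p (1, 0) + fderiv ℝ A p (1, 0)) + (Real.sin (σ p)*Real.cos (A p) - Real.cos (σ p)*Real.sin (A p))*(fderiv ℝ σ p (0, 1) + fderiv ℝ A p (0, 1)) := by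
    simp only [dd, pdx, pdy, hfadd, hfsub]
    rw [Real.cos_sub, Real.sin_sub]
    try simp only [ContinuousLinearMap.add_apply, ContinuousLinearMap.coe_smul', Pi.smul_apply, smul_eq_mul, ContinuousLinearMap.sub_apply, ContinuousLinearMap.neg_apply, neg_smul, Pi.neg_apply]
    try ring
  have hddbb : dd (fun q => σ q - A q) (fun q => σ q - A q) p = (Real.cos (σ p)*Real.cos (A p) + Real.sin (σ p)*Real.sin (A p))*(fderiv ℝ σ p (1, 0) - fderiv ℝ A p (1, 0)) + (Real.sin (σ p)*Real.cos (A p) - Real.cos (σ p)*Real.sin (A p))*(fderiv ℝ σ p (0, 1) - fderiv ℝ A p (0, 1)) := by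
    simp only [dd, pdx, pdy, hfsub]
    rw [Real.cos_sub, Real.sin_sub]
    try simp only [ContinuousLinearMap.add_apply, ContinuousLinearMap.coe_smul', Pi.smul_apply, smul_eq_mul, ContinuousLinearMap.sub_apply, ContinuousLinearMap.neg_apply, neg_smul, Pi.neg_apply]
    try ring
  have hddac : dd (fun q => σ q + A q) (sound γ ρ s) p = ((Real.cos (σ p)*Real.cos (A p) - Real.sin (σ p)*Real.sin (A p))*(fderiv ℝ (sound γ ρ s) p (1, 0)) + (Real.sin (σ p)*Real.cos (A p) + Real.cos (σ p)*Real.sin (A p))*(fderiv ℝ (sound γ ρ s) p (0, 1))) := by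
    simp only [dd, pdx, pdy, hfadd]
    rw [Real.cos_add, Real.sin_add]
    try simp only [ContinuousLinearMap.add_apply, ContinuousLinearMap.coe_smul', Pi.smul_apply, smul_eq_mul, ContinuousLinearMap.sub_apply, ContinuousLinearMap.neg_apply, neg_smul, Pi.neg_apply]
    try ring
  have hddbc : dd (fun q => σ q - A q) (sound γ ρ s) p = ((Real.cos (σ p)*Real.cos (A p) + Real.sin (σ p)*Real.sin (A p))*(fderiv ℝ (sound γ ρ s) p (1, 0)) + (Real.sin (σ p)*Real.cos (A p) - Real.cos (σ p)*Real.sin (A p))*(fderiv ℝ (sound γ ρ s) p (0, 1))) := by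
    simp only [dd, pdx, pdy, hfsub]
    rw [Real.cos_sub, Real.sin_sub]
    try simp only [ContinuousLinearMap.add_apply, ContinuousLinearMap.coe_smul', Pi.smul_apply, smul_eq_mul, ContinuousLinearMap.sub_apply, ContinuousLinearMap.neg_apply, neg_smul, Pi.neg_apply]
    try ring
  have hddas : dd (fun q => σ q + A q) s p = ((Real.cos (σ p)*Real.cos (A p) - Real.sin (σ p)*Real.sin (A p))*(fderiv ℝ s p (1, 0)) + (Real.sin (σ p)*Real.cos (A p) + Real.cos (σ p)*Real.sin (A p))*(fderiv ℝ s p (0, 1))) := by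
    simp only [dd, pdx, pdy, hfadd]
    rw [Real.cos_add, Real.sin_add]
    try simp only [ContinuousLinearMap.add_apply, ContinuousLinearMap.coe_smul', Pi.smul_apply, smul_eq_mul, ContinuousLinearMap.sub_apply, ContinuousLinearMap.neg_apply, neg_smul, Pi.neg_apply]
    try ring
  have hddbs : dd (fun q => σ q - A q) s p = ((Real.cos (σ p)*Real.cos (A p) + Real.sin (σ p)*Real.sin (A p))*(fderiv ℝ s p (1, 0)) + (Real.sin (σ p)*Real.cos (A p) - Real.cos (σ p)*Real.sin (A p))*(fderiv ℝ s p (0, 1))) := by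
    simp only [dd, pdx, pdy, hfsub]
    rw [Real.cos_sub, Real.sin_sub]
    try simp only [ContinuousLinearMap.add_apply, ContinuousLinearMap.coe_smul', Pi.smul_apply, smul_eq_mul, ContinuousLinearMap.sub_apply, ContinuousLinearMap.neg_apply, neg_smul, Pi.neg_apply]
    try ring
  have hD : (γ*(γ-1)*s p*Real.cos (A p)) ≠ 0 := by positivity
  have hγp1 : γ + 1 ≠ 0 := ne_of_gt (by linarith)
  have hOm2 : Om γ A p = ((3-γ)*Real.cos (A p)^2 - (γ+1)*Real.sin (A p)^2)/((γ+1)*Real.cos (A p)^2) := by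
    have hk1 : kap γ - 1 = (3-γ)/(γ-1) := by rw [kap]; field_simp; ring
    have hk2 : kap γ + 1 = (γ+1)/(γ-1) := by rw [kap]; field_simp; ring
    rw [Om, hk1, hk2, Real.tan_eq_sin_div_cos, div_div_div_cancel_right₀ hγ1]
    field_simp
  refine ⟨?_, ?_, ?_, ?_⟩
  · have hRHS :
        -(1 + kap γ) * Real.tan (A p) * dd (fun q => σ q + A q) (sound γ ρ s) p + vort u v p * Real.sin (A p) ^ 2 * Real.tan (A p) + jay γ ρ s p * Real.tan (A p) * dd (fun q => σ q + A q) s p = (-(γ*s p*(γ+1))*Real.sin (A p)*((Real.cos (σ p)*Real.cos (A p) - Real.sin (σ p)*Real.sin (A p))*(fderiv ℝ (sound γ ρ s) p (1, 0)) + (Real.sin (σ p)*Real.cos (A p) + Real.cos (σ p)*Real.sin (A p))*(fderiv ℝ (sound γ ρ s) p (0, 1))) + γ*s p*(γ-1)*(fderiv ℝ u p (0, 1) - fderiv ℝ v p (1, 0))*Real.sin (A p)^3 + sound γ ρ s p*Real.sin (A p)*((Real.cos (σ p)*Real.cos (A p) - Real.sin (σ p)*Real.sin (A p))*(fderiv ℝ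 s p (1, 0)) + (Real.sin (σ p)*Real.cos (A p) + Real.cos (σ p)*Real.sin (A p))*(fderiv ℝ s p (0, 1)))) / (γ*(γ-1)*s p*Real.cos (A p)) := by
      rw [hddac, hddas]
      simp only [vort, pdx, pdy, jay, kap]
      rw [Real.tan_eq_sin_div_cos]
      field_simp
      ring
    rw [hddab, hRHS, eq_div_iff hD]
    linear_combination k1 + (γ*(γ-1)*s p*Real.cos (A p)*((Real.cos (σ p)*Real.cos (A p) - Real.sin (σ p)*Real.sin (A p))*(fderiv ℝ σ p (1, 0) - fderiv ℝ A p (1, 0)) + (Real.sin (σ p)*Real.cos (A p) + Real.cos (σ p)*Real.sin (A p))*(fderiv ℝ σ p (0, 1) - fderiv ℝ A p (0, 1))) - Real.sin (A p)*((Real.cos (σ p)*Real.cos (A p) - Real.sin (σ p)*Real.sin (A p))*(fderiv ℝ s p (1, 0)) + (Real.sin (σ p)*Real.cos (A p) + Real.cos (σ p)*Real.sin (A p))*(fderiv ℝ s p (0, 1))))*hcq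
  · have hRHS :
        -((1 + kap γ) / 2) * Om γ A p * Real.sin (2 * A p) * dd (fun q => σ q + A q) (sound γ ρ s) p - vort u v p * Real.sin (A p) ^ 2 * Real.tan (A p) + jay γ ρ s p * Real.tan (A p) * Real.cos (2 * A p) * dd (fun q => σ q + A q) s p = (-(γ*s p*((3-γ)*Real.sin (A p)*Real.cos (A p)^2 - (γ+1)*Real.sin (A p)^3))*((Real.cos (σ p)*Real.cos (A p) - Real.sin (σ p)*Real.sin (A p))*(fderiv ℝ (sound γ ρ s) p (1, 0)) + (Real.sin (σ p)*Real.cos (A p) + Real.cos (σ p)*Real.sin (A p))*(fderiv ℝ (sound γ ρ s) p (0, 1))) - γ*s p*(γ-1)*(fderiv ℝ u p (0, 1) - fderiv ℝ v p (1, 0))*Real.sin (A p)^3 + sound γ ρ s p*Real.sin (A p)*(Real.cos (A p)^2-Real.sin (A p)^2)*((Real.cos (σ p)*Real.cos (A p) - Real.sin (σ p)*Real.sin (A p))*(fderiv ℝ s p (1, 0)) + (Real.sin (σ p)*Real.cos (A p) + Real.cos (σ p)*Real.sin (A p))*(fderiv ℝ s p (0, 1)))) / (γ*(γ-1)*s p*Real.cos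 (A p)) := by
      rw [hddac, hddas]
      rw [hOm2]
      simp only [vort, pdx, pdy, jay, kap]
      rw [Real.tan_eq_sin_div_cos, Real.sin_two_mul, Real.cos_two_mul']
      field_simp
      ring
    rw [hddaa, hRHS, eq_div_iff hD]
    linear_combination k2 + (γ*(γ-1)*s p*Real.cos (A p)*((Real.cos (σ p)*Real.cos (A p) - Real.sin (σ p)*Real.sin (A p))*(fderiv ℝ σ p (1, 0) + fderiv ℝ A p (1, 0)) + (Real.sin (σ p)*Real.cos (A p) + Real.cos (σ p)*Real.sin (A p))*(fderiv ℝ σ p (0, 1) + fderiv ℝ A p (0, 1))) - Real.sin (A p)*(Real.cos (A p)^2-Real.sin (A p)^2)*((Real.cos (σ p)*Real.cos (A p) - Real.sin (σ p)*Real.sin (A p))*(fderiv ℝ s p (1, 0)) + (Real.sin (σ p)*Real.cos (A p) + Real.cos (σ p)*Real.sin (A p))*(fderiv ℝ s p (0, 1))))*hcq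
  · have hRHS :
        (1 + kap γ) * Real.tan (A p) * dd (fun q => σ q - A q) (sound γ ρ s) p + vort u v p * Real.sin (A p) ^ 2 * Real.tan (A p) - jay γ ρ s p * Real.tan (A p) * dd (fun q => σ q - A q) s p = (γ*s p*(γ+1)*Real.sin (A p)*((Real.cos (σ p)*Real.cos (A p) + Real.sin (σ p)*Real.sin (A p))*(fderiv ℝ (sound γ ρ s) p (1, 0)) + (Real.sin (σ p)*Real.cos (A p) - Real.cos (σ p)*Real.sin (A p))*(fderiv ℝ (sound γ ρ s) p (0, 1))) + γ*s p*(γ-1)*(fderiv ℝ u p (0, 1) - fderiv ℝ v p (1, 0))*Real.sin (A p)^3 - sound γ ρ s p*Real.sin (A p)*((Real.cos (σ p)*Real.cos (A p) + Real.sin (σ p)*Real.sin (A p))*(fderiv ℝ s p (1, 0)) + (Real.sin (σ p)*Real.cos (A p) - Real.cos (σ p)*Real.sin (A p))*(fderiv ℝ s p (0, 1)))) / (γ*(γ-1)*s p*Real.cos (A p)) := by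
      rw [hddbc, hddbs]
      simp only [vort, pdx, pdy, jay, kap]
      rw [Real.tan_eq_sin_div_cos]
      field_simp
      ring
    rw [hddba, hRHS, eq_div_iff hD]
    linear_combination k3 + (γ*(γ-1)*s p*Real.cos (A p)*((Real.cos (σ p)*Real.cos (A p) + Real.sin (σ p)*Real.sin (A p))*(fderiv ℝ σ p (1, 0) + fderiv ℝ A p (1, 0)) + (Real.sin (σ p)*Real.cos (A p) - Real.cos (σ p)*Real.sin (A p))*(fderiv ℝ σ p (0, 1) + fderiv ℝ A p (0, 1))) + Real.sin (A p)*((Real.cos (σ p)*Real.cos (A p) + Real.sin (σ p)*Real.sin (A p))*(fderiv ℝ s p (1, 0)) + (Real.sin (σ p)*Real.cos (A p) - Real.cos (σ p)*Real.sin (A p))*(fderiv ℝ s p (0, 1))))*hcq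
  · have hRHS :
        ((1 + kap γ) / 2) * Om γ A p * Real.sin (2 * A p) * dd (fun q => σ q - A q) (sound γ ρ s) p - vort u v p * Real.sin (A p) ^ 2 * Real.tan (A p) - jay γ ρ s p * Real.tan (A p) * Real.cos (2 * A p) * dd (fun q => σ q - A q) s p = (γ*s p*((3-γ)*Real.sin (A p)*Real.cos (A p)^2 - (γ+1)*Real.sin (A p)^3)*((Real.cos (σ p)*Real.cos (A p) + Real.sin (σ p)*Real.sin (A p))*(fderiv ℝ (sound γ ρ s) p (1, 0)) + (Real.sin (σ p)*Real.cos (A p) - Real.cos (σ p)*Real.sin (A p))*(fderiv ℝ (sound γ ρ s) p (0, 1))) - γ*s p*(γ-1)*(fderiv ℝ u p (0, 1) - fderiv ℝ v p (1, 0))*Real.sin (A p)^3 - sound γ ρ s p*Real.sin (A p)*(Real.cos (A p)^2-Real.sin (A p)^2)*((Real.cos (σ p)*Real.cos (A p) + Real.sin (σ p)*Real.sin (A p))*(fderiv ℝ s p (1, 0)) + (Real.sin (σ p)*Real.cos (A p) - Real.cos (σ p)*Real.sin (A p))*(fderiv ℝ s p (0, 1)))) / (γ*(γ-1)*s p*Real.cos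 (A p)) := by
      rw [hddbc, hddbs]
      rw [hOm2]
      simp only [vort, pdx, pdy, jay, kap]
      rw [Real.tan_eq_sin_div_cos, Real.sin_two_mul, Real.cos_two_mul']
      field_simp
      ring
    rw [hddbb, hRHS, eq_div_iff hD]
    linear_combination k4 + (γ*(γ-1)*s p*Real.cos (A p)*((Real.cos (σ p)*Real.cos (A p) + Real.sin (σ p)*Real.sin (A p))*(fderiv ℝ σ p (1, 0) - fderiv ℝ A p (1, 0)) + (Real.sin (σ p)*Real.cos (A p) - Real.cos (σ p)*Real.sin (A p))*(fderiv ℝ σ p (0, 1) - fderiv ℝ A p (0, 1))) + Real.sin (A p)*(Real.cos (A p)^2-Real.sin (A p)^2)*((Real.cos (σ p)*Real.cos (A p) + Real.sin (σ p)*Real.sin (A p))*(fderiv ℝ s p (1, 0)) + (Real.sin (σ p)*Real.cos (A p) - Real.cos (σ p)*Real.sin (A p))*(fderiv ℝ s p (0, 1))))*hcq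

end
end

section
/- Let (u, v, ρ, s) be a C¹ supersonic solution of the smooth-flow 2D steady full Euler system on U, with flow angle σ, Mach angle A ∈ (0, π/2), α = σ + A, β = σ − A, κ = 2/(γ−1), j = c/(γ(γ−1)s), and ω = u_y − vₓ. Then on U: ∂₊u = κ sin β · ∂₊c + ω cos σ sin A − j sin β · ∂₊s; ∂₋u = −κ sin α · ∂₋c − ω cos σ sin A + j sin α · ∂₋s; ∂₊v = −κ cos β · ∂₊c + ω sin σ sin A + j cos β · ∂₊s; and ∂₋v = κ cos α · ∂₋c − ω sin σ sin A − j cos α · ∂₋s. -/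
open Real

noncomputable section

/-- characteristic equations for the velocity components. -/
theorem stmt_6 (γ : ℝ) (hγ : 1 < γ) (U : Set (ℝ × ℝ)) (hU : IsOpen U)
    (u v ρ s σ A : ℝ × ℝ → ℝ)
    (hu : ContDiffOn ℝ 1 u U) (hv : ContDiffOn ℝ 1 v U)
    (hρ : ContDiffOn ℝ 1 ρ U) (hs : ContDiffOn ℝ 1 s U)
    (hσ : ContDiffOn ℝ 1 σ U) (hA : ContDiffOn ℝ 1 A U)
    (hρpos : ∀ p ∈ U, 0 < ρ p) (hspos : ∀ p ∈ U, 0 < s p)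
    (hmass : ∀ p ∈ U, pdx (fun q => ρ q * u q) p + pdy (fun q => ρ q * v q) p = 0)
    (hmomx : ∀ p ∈ U,
      u p * pdx u p + v p * pdy u p + (ρ p)⁻¹ * pdx (fun q => s q * ρ q ^ γ) p = 0)
    (hmomy : ∀ p ∈ U,
      u p * pdx v p + v p * pdy v p + (ρ p)⁻¹ * pdy (fun q => s q * ρ q ^ γ) p = 0)
    (hent : ∀ p ∈ U, u p * pdx s p + v p * pdy s p = 0)
    (hsup : ∀ p ∈ U, (sound γ ρ s p) ^ 2 < u p ^ 2 + v p ^ 2)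
    (huσ : ∀ p ∈ U, u p = speed u v p * Real.cos (σ p))
    (hvσ : ∀ p ∈ U, v p = speed u v p * Real.sin (σ p))
    (hsinA : ∀ p ∈ U, Real.sin (A p) = sound γ ρ s p / speed u v p)
    (hA0 : ∀ p ∈ U, 0 < A p) (hA2 : ∀ p ∈ U, A p < Real.pi / 2)
    :
    ∀ p ∈ U,
      (dd (fun q => σ q + A q) u p =
        kap γ * Real.sin (σ p - A p) * dd (fun q => σ q + A q) (sound γ ρ s) p +
        vort u v p * Real.cos (σ p) * Real.sin (A p) -
        jay γ ρ s p * Real.sin (σ p - A p) * dd (fun q => σ q + A q) s p) ∧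
      (dd (fun q => σ q - A q) u p =
        -(kap γ) * Real.sin (σ p + A p) * dd (fun q => σ q - A q) (sound γ ρ s) p -
        vort u v p * Real.cos (σ p) * Real.sin (A p) +
        jay γ ρ s p * Real.sin (σ p + A p) * dd (fun q => σ q - A q) s p) ∧
      (dd (fun q => σ q + A q) v p =
        -(kap γ) * Real.cos (σ p - A p) * dd (fun q => σ q + A q) (sound γ ρ s) p +
        vort u v p * Real.sin (σ p) * Real.sin (A p) +
        jay γ ρ s p * Real.cos (σ p - A p) * dd (fun q => σ q + A q) s p) ∧
      (dd (fun q => σ q - A q) v p =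
        kap γ * Real.cos (σ p + A p) * dd (fun q => σ q - A q) (sound γ ρ s) p -
        vort u v p * Real.sin (σ p) * Real.sin (A p) -
        jay γ ρ s p * Real.cos (σ p + A p) * dd (fun q => σ q - A q) s p) := by
  intro p hp
  have hpU : U ∈ nhds p := hU.mem_nhds hp
  have hρ0 : 0 < ρ p := hρpos p hp
  have hs0 : 0 < s p := hspos p hp
  have hγ1 : (0:ℝ) < γ - 1 := by linarith
  have hγ0 : (0:ℝ) < γ := by linarith
  -- derivatives exist
  have hDu : HasFDerivAt u (fderiv ℝ u p) p :=
    ((hu.differentiableOn one_ne_zero).differentiableAt hpU).hasFDerivAt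
  have hDv : HasFDerivAt v (fderiv ℝ v p) p :=
    ((hv.differentiableOn one_ne_zero).differentiableAt hpU).hasFDerivAt
  have hDρ : HasFDerivAt ρ (fderiv ℝ ρ p) p :=
    ((hρ.differentiableOn one_ne_zero).differentiableAt hpU).hasFDerivAt
  have hDs : HasFDerivAt s (fderiv ℝ s p) p :=
    ((hs.differentiableOn one_ne_zero).differentiableAt hpU).hasFDerivAt
  -- basic positivity
  have hr1pos : 0 < ρ p ^ (γ - 1) := Real.rpow_pos_of_pos hρ0 _
  have hgpos : 0 < γ * s p * ρ p ^ (γ - 1) := by positivity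
  have hcpos : 0 < sound γ ρ s p := Real.sqrt_pos.mpr hgpos
  have hc2 : sound γ ρ s p ^ 2 = γ * s p * ρ p ^ (γ - 1) := Real.sq_sqrt hgpos.le
  have hqpos : 0 < speed u v p := by
    have h1 := hsup p hp
    have h2 : 0 < sound γ ρ s p ^ 2 := pow_pos hcpos 2
    exact Real.sqrt_pos.mpr (by linarith)
  have hu' : u p = speed u v p * Real.cos (σ p) := huσ p hp
  have hv' : v p = speed u v p * Real.sin (σ p) := hvσ p hp
  have hc' : sound γ ρ s p = speed u v p * Real.sin (A p) := by
    rw [hsinA p hp]; field_simp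
  -- rpow identities
  have hr : ρ p ^ (γ - 1) = ρ p ^ (γ - 1 - 1) * ρ p := by
    rw [← Real.rpow_add_one hρ0.ne' (γ - 1 - 1), show γ - 1 - 1 + 1 = γ - 1 by ring]
  have hrg : ρ p ^ γ = ρ p ^ (γ - 1) * ρ p := by
    rw [← Real.rpow_add_one hρ0.ne' (γ - 1), show γ - 1 + 1 = γ by ring]
  have hκ : kap γ * (γ - 1) = 2 := by
    rw [kap]; field_simp
  have hjc : jay γ ρ s p * sound γ ρ s p * (γ - 1) = ρ p ^ (γ - 1) := by
    rw [jay]; field_simp; linear_combination hc2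
  have hinv : (ρ p)⁻¹ * ρ p = 1 := inv_mul_cancel₀ hρ0.ne'
  -- pressure derivative
  have hρpowγ : HasFDerivAt (fun x => ρ x ^ γ) ((γ * ρ p ^ (γ - 1)) • fderiv ℝ ρ p) p :=
    hDρ.rpow_const (Or.inl hρ0.ne')
  have hP : HasFDerivAt (fun x => s x * ρ x ^ γ)
      (s p • ((γ * ρ p ^ (γ - 1)) • fderiv ℝ ρ p) + (ρ p ^ γ) • fderiv ℝ s p) p :=
    hDs.mul hρpowγ
  have hpx : pdx (fun q => s q * ρ q ^ γ) p
      = s p * (γ * ρ p ^ (γ - 1) * pdx ρ p) + ρ p ^ γ * pdx s p := by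
    simp only [pdx, hP.fderiv, ContinuousLinearMap.add_apply, ContinuousLinearMap.coe_smul',
      Pi.smul_apply, smul_eq_mul]
  have hpy : pdy (fun q => s q * ρ q ^ γ) p
      = s p * (γ * ρ p ^ (γ - 1) * pdy ρ p) + ρ p ^ γ * pdy s p := by
    simp only [pdy, hP.fderiv, ContinuousLinearMap.add_apply, ContinuousLinearMap.coe_smul',
      Pi.smul_apply, smul_eq_mul]
  -- sound speed derivative
  have hρpow1 : HasFDerivAt (fun x => ρ x ^ (γ - 1))
      (((γ - 1) * ρ p ^ (γ - 1 - 1)) • fderiv ℝ ρ p) p :=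
    hDρ.rpow_const (Or.inl hρ0.ne')
  have hgd : HasFDerivAt (fun x => γ * s x * ρ x ^ (γ - 1))
      ((γ * s p) • (((γ - 1) * ρ p ^ (γ - 1 - 1)) • fderiv ℝ ρ p)
        + (ρ p ^ (γ - 1)) • (γ • fderiv ℝ s p)) p :=
    (hDs.const_mul γ).mul hρpow1
  have hcd : HasFDerivAt (sound γ ρ s)
      ((1 / (2 * Real.sqrt (γ * s p * ρ p ^ (γ - 1)))) •
        ((γ * s p) • (((γ - 1) * ρ p ^ (γ - 1 - 1)) • fderiv ℝ ρ p)
          + (ρ p ^ (γ - 1)) • (γ • fderiv ℝ s p))) p :=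
    hgd.sqrt hgpos.ne'
  have hss : Real.sqrt (γ * s p * ρ p ^ (γ - 1)) = sound γ ρ s p := rfl
  have h2cx : 2 * sound γ ρ s p * pdx (sound γ ρ s) p
      = γ * (γ - 1) * s p * ρ p ^ (γ - 1 - 1) * pdx ρ p + γ * ρ p ^ (γ - 1) * pdx s p := by
    simp only [pdx, hcd.fderiv, ContinuousLinearMap.add_apply, ContinuousLinearMap.coe_smul',
      Pi.smul_apply, smul_eq_mul, hss]
    field_simp
  have h2cy : 2 * sound γ ρ s p * pdy (sound γ ρ s) p
      = γ * (γ - 1) * s p * ρ p ^ (γ - 1 - 1) * pdy ρ p + γ * ρ p ^ (γ - 1) * pdy s p := by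
    simp only [pdy, hcd.fderiv, ContinuousLinearMap.add_apply, ContinuousLinearMap.coe_smul',
      Pi.smul_apply, smul_eq_mul, hss]
    field_simp
  -- mass equation in explicit form
  have hmu : pdx (fun q => ρ q * u q) p = ρ p * pdx u p + u p * pdx ρ p := by
    simp only [pdx, (hDρ.fun_mul hDu).fderiv, ContinuousLinearMap.add_apply,
      ContinuousLinearMap.coe_smul', Pi.smul_apply, smul_eq_mul]
  have hmv : pdy (fun q => ρ q * v q) p = ρ p * pdy v p + v p * pdy ρ p := by
    simp only [pdy, (hDρ.fun_mul hDv).fderiv, ContinuousLinearMap.add_apply,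
      ContinuousLinearMap.coe_smul', Pi.smul_apply, smul_eq_mul]
  have hms := hmass p hp
  rw [hmu, hmv] at hms
  have hmx := hmomx p hp
  rw [hpx] at hmx
  have hmy := hmomy p hp
  rw [hpy] at hmy
  have hent' := hent p hp
  -- the four characteristic relations N1-N4
  have hN1 : Real.cos (σ p) * pdx u p + Real.sin (σ p) * pdy u p
      + Real.sin (A p) * (kap γ * pdx (sound γ ρ s) p - jay γ ρ s p * pdx s p) = 0 := by
    have key : speed u v p * (Real.cos (σ p) * pdx u p + Real.sin (σ p) * pdy u p
        + Real.sin (A p) * (kap γ * pdx (sound γ ρ s) p - jay γ ρ s p * pdx s p)) = 0 := by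
      linear_combination (-(pdx u p)) * hu' + (-(pdy u p)) * hv'
        + (-(kap γ * pdx (sound γ ρ s) p - jay γ ρ s p * pdx s p)) * hc'
        + hmx + (kap γ / 2) * h2cx
        + (γ * s p * ρ p ^ (γ - 1 - 1) * pdx ρ p / 2
            + jay γ ρ s p * sound γ ρ s p * pdx s p / 2
            + ρ p ^ (γ - 1) * pdx s p / 2) * hκ
        + (-(γ * s p * ρ p ^ (γ - 1 - 1) * pdx ρ p) - ρ p ^ (γ - 1) * pdx s p) * hinv
        + (-((ρ p)⁻¹ * γ * s p * pdx ρ p)) * hr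
        + (-(kap γ * pdx s p / 2)) * hjc
        + (-((ρ p)⁻¹ * pdx s p)) * hrg
    exact (mul_eq_zero.mp key).resolve_left hqpos.ne'
  have hN2 : Real.cos (σ p) * pdx v p + Real.sin (σ p) * pdy v p
      + Real.sin (A p) * (kap γ * pdy (sound γ ρ s) p - jay γ ρ s p * pdy s p) = 0 := by
    have key : speed u v p * (Real.cos (σ p) * pdx v p + Real.sin (σ p) * pdy v p
        + Real.sin (A p) * (kap γ * pdy (sound γ ρ s) p - jay γ ρ s p * pdy s p)) = 0 := by
      linear_combination (-(pdx v p)) * hu' + (-(pdy v p)) * hv'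
        + (-(kap γ * pdy (sound γ ρ s) p - jay γ ρ s p * pdy s p)) * hc'
        + hmy + (kap γ / 2) * h2cy
        + (γ * s p * ρ p ^ (γ - 1 - 1) * pdy ρ p / 2
            + jay γ ρ s p * sound γ ρ s p * pdy s p / 2
            + ρ p ^ (γ - 1) * pdy s p / 2) * hκ
        + (-(γ * s p * ρ p ^ (γ - 1 - 1) * pdy ρ p) - ρ p ^ (γ - 1) * pdy s p) * hinv
        + (-((ρ p)⁻¹ * γ * s p * pdy ρ p)) * hr
        + (-(kap γ * pdy s p / 2)) * hjc
        + (-((ρ p)⁻¹ * pdy s p)) * hrg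
    exact (mul_eq_zero.mp key).resolve_left hqpos.ne'
  have hN3 : Real.sin (A p) * (pdx u p + pdy v p)
      + kap γ * (Real.cos (σ p) * pdx (sound γ ρ s) p + Real.sin (σ p) * pdy (sound γ ρ s) p)
      = 0 := by
    have key : sound γ ρ s p * (speed u v p * (Real.sin (A p) * (pdx u p + pdy v p)
        + kap γ * (Real.cos (σ p) * pdx (sound γ ρ s) p
          + Real.sin (σ p) * pdy (sound γ ρ s) p))) = 0 := by
      linear_combination (-(sound γ ρ s p * (pdx u p + pdy v p))) * hc'
        + (-(kap γ * sound γ ρ s p * pdx (sound γ ρ s) p)) * hu'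
        + (-(kap γ * sound γ ρ s p * pdy (sound γ ρ s) p)) * hv'
        + (pdx u p + pdy v p) * hc2
        + (kap γ * u p / 2) * h2cx + (kap γ * v p / 2) * h2cy
        + (γ * s p * ρ p ^ (γ - 1 - 1) * (u p * pdx ρ p + v p * pdy ρ p) / 2) * hκ
        + (kap γ * γ * ρ p ^ (γ - 1) / 2) * hent'
        + (γ * s p * ρ p ^ (γ - 1 - 1)) * hms
        + (γ * s p * (pdx u p + pdy v p)) * hr
    have key2 := (mul_eq_zero.mp key).resolve_left hcpos.ne'
    exact (mul_eq_zero.mp key2).resolve_left hqpos.ne'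
  have hN4 : Real.cos (σ p) * pdx s p + Real.sin (σ p) * pdy s p = 0 := by
    have key : speed u v p * (Real.cos (σ p) * pdx s p + Real.sin (σ p) * pdy s p) = 0 := by
      linear_combination hent' + (-(pdx s p)) * hu' + (-(pdy s p)) * hv'
    exact (mul_eq_zero.mp key).resolve_left hqpos.ne'
  -- now the four goals
  simp only [dd, vort]
  rw [Real.cos_add, Real.sin_add, Real.cos_sub, Real.sin_sub]
  set C := Real.cos (σ p)
  set S := Real.sin (σ p)
  set cA := Real.cos (A p)
  set sA := Real.sin (A p)
  set ux := pdx u p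
  set uy := pdy u p
  set vx := pdx v p
  set vy := pdy v p
  set sx := pdx s p
  set sy := pdy s p
  set cx := pdx (sound γ ρ s) p
  set cy := pdy (sound γ ρ s) p
  set κ := kap γ
  set j := jay γ ρ s p
  have P1 : S ^ 2 + C ^ 2 = 1 := Real.sin_sq_add_cos_sq (σ p)
  have P2 : sA ^ 2 + cA ^ 2 = 1 := Real.sin_sq_add_cos_sq (A p)
  refine ⟨?_, ?_, ?_, ?_⟩
  · linear_combination cA * hN1 + sA * hN2 - S * hN3 + j * S * hN4
      + (κ * sA * cA * cx + κ * sA ^ 2 * cy - j * sA * cA * sx - j * sA ^ 2 * sy) * P1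
      + (-(κ * S * C * cx) - κ * S ^ 2 * cy + j * S * C * sx + j * S ^ 2 * sy) * P2
  · linear_combination cA * hN1 - sA * hN2 + S * hN3 - j * S * hN4
      + (κ * sA * cA * cx - κ * sA ^ 2 * cy - j * sA * cA * sx + j * sA ^ 2 * sy) * P1
      + (κ * S * C * cx + κ * S ^ 2 * cy - j * S * C * sx - j * S ^ 2 * sy) * P2
  · linear_combination (-sA) * hN1 + cA * hN2 + C * hN3 - j * C * hN4
      + (-(κ * sA ^ 2 * cx) + κ * sA * cA * cy + j * sA ^ 2 * sx - j * sA * cA * sy) * P1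
      + (κ * C ^ 2 * cx + κ * S * C * cy - j * C ^ 2 * sx - j * S * C * sy) * P2
  · linear_combination sA * hN1 + cA * hN2 - C * hN3 + j * C * hN4
      + (κ * sA ^ 2 * cx + κ * sA * cA * cy - j * sA ^ 2 * sx - j * sA * cA * sy) * P1
      + (-(κ * C ^ 2 * cx) - κ * S * C * cy + j * C ^ 2 * sx + j * S * C * sy) * P2

end
end

section
/- (Commutator relation along C₀ and C₊.) Let U ⊆ ℝ² be open, σ, A : U → ℝ be C¹ functions with sin A ≠ 0 on U, and set α = σ + A, ∂₀ = cos σ ∂ₓ + sin σ ∂_y, ∂₊ = cos α ∂ₓ + sin α ∂_y. Then for every C² function f : U → ℝ, at every point of U: ∂₀∂₊f − ∂₊∂₀f = (1/sin A)[(cos A · ∂₊σ − ∂₀α) ∂₀f − (∂₊σ − cos A · ∂₀α) ∂₊f]. -/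
open Real

noncomputable section

/-- commutator relation between the stream derivative `∂₀` (angle `σ`)
and the characteristic derivative `∂₊` (angle `α = σ + A`), applied to a C² function. -/
theorem stmt_8 (U : Set (ℝ × ℝ)) (hU : IsOpen U) (σ A : ℝ × ℝ → ℝ)
    (hσ : ContDiffOn ℝ 1 σ U) (hA : ContDiffOn ℝ 1 A U)
    (hsinA : ∀ p ∈ U, Real.sin (A p) ≠ 0)
    (f : ℝ × ℝ → ℝ) (hf : ContDiffOn ℝ 2 f U) :
    ∀ p ∈ U,
      dd σ (dd (fun q => σ q + A q) f) p - dd (fun q => σ q + A q) (dd σ f) p =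
        (1 / Real.sin (A p)) *
          ((Real.cos (A p) * dd (fun q => σ q + A q) σ p -
              dd σ (fun q => σ q + A q) p) * dd σ f p -
           (dd (fun q => σ q + A q) σ p -
              Real.cos (A p) * dd σ (fun q => σ q + A q) p) *
             dd (fun q => σ q + A q) f p) := by
  intro p hp
  have hUp : U ∈ nhds p := hU.mem_nhds hp
  have hfp : ContDiffAt ℝ 2 f p := hf.contDiffAt hUp
  have hσp : ContDiffAt ℝ 1 σ p := hσ.contDiffAt hUp
  have hAp : ContDiffAt ℝ 1 A p := hA.contDiffAt hUp
  have hσ' : HasFDerivAt σ (fderiv ℝ σ p) p := (hσp.differentiableAt one_ne_zero).hasFDerivAt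
  have hA' : HasFDerivAt A (fderiv ℝ A p) p := (hAp.differentiableAt one_ne_zero).hasFDerivAt
  have hα' : HasFDerivAt (fun q => σ q + A q) (fderiv ℝ σ p + fderiv ℝ A p) p := hσ'.add hA'
  have hαf : fderiv ℝ (fun q => σ q + A q) p = fderiv ℝ σ p + fderiv ℝ A p := hα'.fderiv
  have hf1 : ContDiffAt ℝ 1 (fderiv ℝ f) p := hfp.fderiv_right (by norm_num)
  have hf'' : HasFDerivAt (fderiv ℝ f) (fderiv ℝ (fderiv ℝ f) p) p :=
    (hf1.differentiableAt one_ne_zero).hasFDerivAt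
  have hsym : fderiv ℝ (fderiv ℝ f) p (0, 1) (1, 0) = fderiv ℝ (fderiv ℝ f) p (1, 0) (0, 1) :=
    (hfp.isSymmSndFDerivAt (by norm_num)) (0, 1) (1, 0)
  have hg : ∀ v : ℝ × ℝ, HasFDerivAt (fun q => fderiv ℝ f q v)
      ((ContinuousLinearMap.apply ℝ ℝ v).comp (fderiv ℝ (fderiv ℝ f) p)) p :=
    fun v => (ContinuousLinearMap.apply ℝ ℝ v).hasFDerivAt.comp p hf''
  -- derivative of dd α f at p
  have hDα := ((hα'.cos.mul (hg (1, 0))).add (hα'.sin.mul (hg (0, 1))))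
  have hDσ := ((hσ'.cos.mul (hg (1, 0))).add (hσ'.sin.mul (hg (0, 1))))
  have eα : fderiv ℝ (dd (fun q => σ q + A q) f) p =
      (Real.cos (σ p + A p) •
          ((ContinuousLinearMap.apply ℝ ℝ ((1 : ℝ), (0 : ℝ))).comp (fderiv ℝ (fderiv ℝ f) p)) +
        fderiv ℝ f p (1, 0) • (-Real.sin (σ p + A p) • (fderiv ℝ σ p + fderiv ℝ A p))) +
      (Real.sin (σ p + A p) •
          ((ContinuousLinearMap.apply ℝ ℝ ((0 : ℝ), (1 : ℝ))).comp (fderiv ℝ (fderiv ℝ f) p)) +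
        fderiv ℝ f p (0, 1) • (Real.cos (σ p + A p) • (fderiv ℝ σ p + fderiv ℝ A p))) :=
    HasFDerivAt.fderiv hDα
  have eσ : fderiv ℝ (dd σ f) p =
      (Real.cos (σ p) •
          ((ContinuousLinearMap.apply ℝ ℝ ((1 : ℝ), (0 : ℝ))).comp (fderiv ℝ (fderiv ℝ f) p)) +
        fderiv ℝ f p (1, 0) • (-Real.sin (σ p) • fderiv ℝ σ p)) +
      (Real.sin (σ p) •
          ((ContinuousLinearMap.apply ℝ ℝ ((0 : ℝ), (1 : ℝ))).comp (fderiv ℝ (fderiv ℝ f) p)) +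
        fderiv ℝ f p (0, 1) • (Real.cos (σ p) • fderiv ℝ σ p)) :=
    HasFDerivAt.fderiv hDσ
  simp only [dd, pdx, pdy, eα, eσ, hαf, ContinuousLinearMap.add_apply,
    ContinuousLinearMap.smul_apply, ContinuousLinearMap.comp_apply,
    ContinuousLinearMap.apply_apply, ContinuousLinearMap.neg_apply, smul_eq_mul, neg_smul,
    neg_mul]
  rw [hsym]
  rw [Real.cos_add, Real.sin_add]
  have hA2 : Real.sin (A p) ^ 2 + Real.cos (A p) ^ 2 = 1 := Real.sin_sq_add_cos_sq (A p)
  have hsA : Real.sin (A p) ≠ 0 := hsinA p hp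
  set cs := Real.cos (σ p)
  set ss := Real.sin (σ p)
  set cA := Real.cos (A p)
  set sA := Real.sin (A p)
  set sx := fderiv ℝ σ p (1, 0)
  set sy := fderiv ℝ σ p (0, 1)
  set ax := fderiv ℝ A p (1, 0)
  set ay := fderiv ℝ A p (0, 1)
  set fx := fderiv ℝ f p (1, 0)
  set fy := fderiv ℝ f p (0, 1)
  set bxx := fderiv ℝ (fderiv ℝ f) p (1, 0) (1, 0)
  set bxy := fderiv ℝ (fderiv ℝ f) p (1, 0) (0, 1)
  set byy := fderiv ℝ (fderiv ℝ f) p (0, 1) (0, 1)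
  field_simp
  linear_combination (-(cs * fx + ss * fy) * (cs * (ax + sx) + ss * (ay + sy))) * hA2

end
end

section
/- (Commutator relation along C₋ and C₊.) Let U ⊆ ℝ² be open, α, β : U → ℝ be C¹ functions with sin(α − β) ≠ 0 on U, set 2A = α − β, ∂₊ = cos α ∂ₓ + sin α ∂_y, ∂₋ = cos β ∂ₓ + sin β ∂_y. Then for every C² function f : U → ℝ, at every point of U: ∂₋∂₊f − ∂₊∂₋f = (1/sin 2A)[(cos 2A · ∂₊β − ∂₋α) ∂₋f − (∂₊β − cos 2A · ∂₋α) ∂₊f]. -/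
open Real

noncomputable section

lemma fderiv_dd_apply (θ f : ℝ × ℝ → ℝ) (p : ℝ × ℝ)
    (hθ : DifferentiableAt ℝ θ p) (hF : DifferentiableAt ℝ (fderiv ℝ f) p) (v : ℝ × ℝ) :
    fderiv ℝ (dd θ f) p v =
      (-Real.sin (θ p) * fderiv ℝ θ p v) * pdx f p
      + Real.cos (θ p) * (fderiv ℝ (fderiv ℝ f) p v (1, 0))
      + ((Real.cos (θ p) * fderiv ℝ θ p v) * pdy f p
      + Real.sin (θ p) * (fderiv ℝ (fderiv ℝ f) p v (0, 1))) := by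
  have hθ' := hθ.hasFDerivAt
  have hF' := hF.hasFDerivAt
  have hx : HasFDerivAt (pdx f)
      ((ContinuousLinearMap.apply ℝ ℝ ((1:ℝ), (0:ℝ))).comp (fderiv ℝ (fderiv ℝ f) p)) p :=
    (ContinuousLinearMap.apply ℝ ℝ ((1:ℝ), (0:ℝ))).hasFDerivAt.comp p hF'
  have hy : HasFDerivAt (pdy f)
      ((ContinuousLinearMap.apply ℝ ℝ ((0:ℝ), (1:ℝ))).comp (fderiv ℝ (fderiv ℝ f) p)) p :=
    (ContinuousLinearMap.apply ℝ ℝ ((0:ℝ), (1:ℝ))).hasFDerivAt.comp p hF'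
  have hc : HasFDerivAt (fun q => Real.cos (θ q)) ((-Real.sin (θ p)) • fderiv ℝ θ p) p :=
    (Real.hasDerivAt_cos (θ p)).comp_hasFDerivAt p hθ'
  have hs : HasFDerivAt (fun q => Real.sin (θ q)) ((Real.cos (θ p)) • fderiv ℝ θ p) p :=
    (Real.hasDerivAt_sin (θ p)).comp_hasFDerivAt p hθ'
  have hdd : HasFDerivAt (dd θ f)
      ((Real.cos (θ p) • ((ContinuousLinearMap.apply ℝ ℝ ((1:ℝ), (0:ℝ))).comp
          (fderiv ℝ (fderiv ℝ f) p)) + pdx f p • ((-Real.sin (θ p)) • fderiv ℝ θ p))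
       + (Real.sin (θ p) • ((ContinuousLinearMap.apply ℝ ℝ ((0:ℝ), (1:ℝ))).comp
          (fderiv ℝ (fderiv ℝ f) p)) + pdy f p • ((Real.cos (θ p)) • fderiv ℝ θ p))) p :=
    (hc.mul hx).add (hs.mul hy)
  rw [hdd.fderiv]
  simp [ContinuousLinearMap.add_apply, ContinuousLinearMap.smul_apply,
    ContinuousLinearMap.comp_apply, ContinuousLinearMap.apply_apply, smul_eq_mul, pdx, pdy]
  ring
/-- commutator relation between the characteristic derivatives
`∂₋` (angle `β`) and `∂₊` (angle `α`), with `2A = α − β`, applied to a C² function. -/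
theorem stmt_9 (U : Set (ℝ × ℝ)) (hU : IsOpen U) (α β : ℝ × ℝ → ℝ)
    (hα : ContDiffOn ℝ 1 α U) (hβ : ContDiffOn ℝ 1 β U)
    (hsin : ∀ p ∈ U, Real.sin (α p - β p) ≠ 0)
    (f : ℝ × ℝ → ℝ) (hf : ContDiffOn ℝ 2 f U) :
    ∀ p ∈ U,
      dd β (dd α f) p - dd α (dd β f) p =
        (1 / Real.sin (α p - β p)) *
          ((Real.cos (α p - β p) * dd α β p - dd β α p) * dd β f p -
           (dd α β p - Real.cos (α p - β p) * dd β α p) * dd α f p) := by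
  intro p hp
  have hmem : U ∈ nhds p := hU.mem_nhds hp
  have hαd : DifferentiableAt ℝ α p := (hα.differentiableOn one_ne_zero).differentiableAt hmem
  have hβd : DifferentiableAt ℝ β p := (hβ.differentiableOn one_ne_zero).differentiableAt hmem
  have hFd : DifferentiableAt ℝ (fderiv ℝ f) p :=
    ((hf.fderiv_of_isOpen hU (by norm_num)).differentiableOn one_ne_zero).differentiableAt hmem
  have hsym : IsSymmSndFDerivAt ℝ f p :=
    (hf.contDiffAt hmem).isSymmSndFDerivAt (by norm_num)
  have hS := hsin p hp
  have hsymm : fderiv ℝ (fderiv ℝ f) p (1, 0) (0, 1) = fderiv ℝ (fderiv ℝ f) p (0, 1) (1, 0) :=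
    hsym (1, 0) (0, 1)
  have key1 := fderiv_dd_apply α f p hαd hFd (1, 0)
  have key2 := fderiv_dd_apply α f p hαd hFd (0, 1)
  have key3 := fderiv_dd_apply β f p hβd hFd (1, 0)
  have key4 := fderiv_dd_apply β f p hβd hFd (0, 1)
  have hC : Real.cos (α p - β p) = Real.cos (α p) * Real.cos (β p) + Real.sin (α p) * Real.sin (β p) := Real.cos_sub _ _
  have hSv : Real.sin (α p - β p) = Real.sin (α p) * Real.cos (β p) - Real.cos (α p) * Real.sin (β p) := Real.sin_sub _ _
  have e1 : dd β (dd α f) p = Real.cos (β p) * fderiv ℝ (dd α f) p (1, 0) + Real.sin (β p) * fderiv ℝ (dd α f) p (0, 1) := rfl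
  have e2 : dd α (dd β f) p = Real.cos (α p) * fderiv ℝ (dd β f) p (1, 0) + Real.sin (α p) * fderiv ℝ (dd β f) p (0, 1) := rfl
  have e3 : dd α β p = Real.cos (α p) * fderiv ℝ β p (1, 0) + Real.sin (α p) * fderiv ℝ β p (0, 1) := rfl
  have e4 : dd β α p = Real.cos (β p) * fderiv ℝ α p (1, 0) + Real.sin (β p) * fderiv ℝ α p (0, 1) := rfl
  have e5 : dd α f p = Real.cos (α p) * pdx f p + Real.sin (α p) * pdy f p := rfl
  have e6 : dd β f p = Real.cos (β p) * pdx f p + Real.sin (β p) * pdy f p := rfl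
  rw [e1, e2, e3, e4, e5, e6, key1, key2, key3, key4, hC, hSv, hsymm]
  rw [hSv] at hS
  set ca := Real.cos (α p); set sa := Real.sin (α p)
  set cb := Real.cos (β p); set sb := Real.sin (β p)
  set ax := fderiv ℝ α p (1, 0); set ay := fderiv ℝ α p (0, 1)
  set bx := fderiv ℝ β p (1, 0); set b_y := fderiv ℝ β p (0, 1)
  set fx := pdx f p; set fy := pdy f p
  set h11 := fderiv ℝ (fderiv ℝ f) p (1, 0) (1, 0)
  set h21 := fderiv ℝ (fderiv ℝ f) p (0, 1) (1, 0)
  set h22 := fderiv ℝ (fderiv ℝ f) p (0, 1) (0, 1)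
  have pa : sa ^ 2 + ca ^ 2 = 1 := Real.sin_sq_add_cos_sq (α p)
  have pb : sb ^ 2 + cb ^ 2 = 1 := Real.sin_sq_add_cos_sq (β p)
  rw [one_div, eq_inv_mul_iff_mul_eq₀ hS]
  linear_combination (b_y*fy - sb^2*b_y*fy - sb^2*ay*fy - cb*sb*ay*fx - cb*sb*ax*fy
      - cb^2*b_y*fy - cb^2*ax*fx) * pa
    + (-b_y*fy - ca*sa*b_y*fx - ca*sa*bx*fy + ca^2*b_y*fy - ca^2*bx*fx) * pb
end
end

section
/- Let (u, v, ρ, s) be a C² supersonic solution of the smooth-flow 2D steady full Euler system on U, with flow angle σ, Mach angle A ∈ (0, π/2), α = σ + A, β = σ − A. Then ∂₀(∂₊s / c^{(γ+1)/(γ−1)}) = 0 on U; that is, the quantity ∂₊s / c^{(γ+1)/(γ−1)} is constant along each stream characteristic. -/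
open Real

noncomputable section

set_option maxHeartbeats 1000000 in
/-- `∂₀(∂₊s / c^((γ+1)/(γ−1))) = 0`, i.e. `∂₊s / c^((γ+1)/(γ−1))`
is constant along each stream characteristic. -/
theorem stmt_10 (γ : ℝ) (hγ : 1 < γ) (U : Set (ℝ × ℝ)) (hU : IsOpen U)
    (u v ρ s σ A : ℝ × ℝ → ℝ)
    (hu : ContDiffOn ℝ 2 u U) (hv : ContDiffOn ℝ 2 v U)
    (hρ : ContDiffOn ℝ 2 ρ U) (hs : ContDiffOn ℝ 2 s U)
    (hσ : ContDiffOn ℝ 1 σ U) (hA : ContDiffOn ℝ 1 A U)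
    (hρpos : ∀ p ∈ U, 0 < ρ p) (hspos : ∀ p ∈ U, 0 < s p)
    (hmass : ∀ p ∈ U, pdx (fun q => ρ q * u q) p + pdy (fun q => ρ q * v q) p = 0)
    (hmomx : ∀ p ∈ U,
      u p * pdx u p + v p * pdy u p + (ρ p)⁻¹ * pdx (fun q => s q * ρ q ^ γ) p = 0)
    (hmomy : ∀ p ∈ U,
      u p * pdx v p + v p * pdy v p + (ρ p)⁻¹ * pdy (fun q => s q * ρ q ^ γ) p = 0)
    (hent : ∀ p ∈ U, u p * pdx s p + v p * pdy s p = 0)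
    (hsup : ∀ p ∈ U, (sound γ ρ s p) ^ 2 < u p ^ 2 + v p ^ 2)
    (huσ : ∀ p ∈ U, u p = speed u v p * Real.cos (σ p))
    (hvσ : ∀ p ∈ U, v p = speed u v p * Real.sin (σ p))
    (hsinA : ∀ p ∈ U, Real.sin (A p) = sound γ ρ s p / speed u v p)
    (hA0 : ∀ p ∈ U, 0 < A p) (hA2 : ∀ p ∈ U, A p < Real.pi / 2)
    :
    ∀ p ∈ U,
      dd σ (fun q => dd (fun r => σ r + A r) s q /
        sound γ ρ s q ^ ((γ + 1) / (γ - 1))) p = 0 := by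
  intro p hp
  have hγ0 : (0:ℝ) < γ := by linarith
  have key : ∀ q ∈ U, dd (fun r => σ r + A r) s q /
      sound γ ρ s q ^ ((γ + 1) / (γ - 1))
      = (u q * pdy s q - v q * pdx s q) * (ρ q * (u q * u q + v q * v q))⁻¹ *
        (γ * s q) ^ (-(γ - 1)⁻¹) := by
    intro q hq
    have hρq : 0 < ρ q := hρpos q hq
    have hsq : 0 < s q := hspos q hq
    have hγ1 : (0:ℝ) < γ - 1 := by linarith
    have hc2pos : 0 < γ * s q * ρ q ^ (γ - 1) := by
      have h1 := Real.rpow_pos_of_pos (hρpos q hq) (γ - 1)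
      positivity
    have hcpos : 0 < sound γ ρ s q := Real.sqrt_pos.2 hc2pos
    have hc2 : sound γ ρ s q ^ 2 = γ * s q * ρ q ^ (γ - 1) := Real.sq_sqrt hc2pos.le
    have hq2pos : 0 < u q ^ 2 + v q ^ 2 := lt_trans (pow_pos hcpos 2) (hsup q hq)
    have hQpos : 0 < speed u v q := Real.sqrt_pos.2 hq2pos
    have hQ2 : speed u v q ^ 2 = u q ^ 2 + v q ^ 2 := Real.sq_sqrt hq2pos.le
    have hcos : Real.cos (σ q) = u q / speed u v q := by rw [(huσ q hq)]; field_simp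
    have hsin : Real.sin (σ q) = v q / speed u v q := by rw [(hvσ q hq)]; field_simp
    have hdd : dd (fun r => σ r + A r) s q
        = sound γ ρ s q * (u q * pdy s q - v q * pdx s q) / (u q ^ 2 + v q ^ 2) := by
      simp only [dd, Real.cos_add, Real.sin_add, hcos, hsin, (hsinA q hq)]
      rw [← hQ2]
      field_simp
      ring_nf
      linear_combination (Real.cos (A q) * speed u v q) * (hent q hq)
    have hgs : (0:ℝ) < γ * s q := by positivity
    have he : (0:ℝ) < (γ * s q) ^ ((γ - 1)⁻¹) := Real.rpow_pos_of_pos hgs _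
    have hck : sound γ ρ s q ^ ((γ + 1) / (γ - 1))
        = sound γ ρ s q * ((γ * s q) ^ ((γ - 1)⁻¹) * ρ q) := by
      have h1 : sound γ ρ s q = (γ * s q * ρ q ^ (γ - 1)) ^ ((1:ℝ)/2) := by
        rw [sound, Real.sqrt_eq_rpow]
      have hsplit : (γ + 1) / (γ - 1) = 1 + 2 * (γ - 1)⁻¹ := by
        field_simp
        ring
      rw [hsplit, Real.rpow_add hcpos, Real.rpow_one]
      congr 1
      rw [h1, ← Real.rpow_mul hc2pos.le]
      rw [show (1:ℝ)/2 * (2 * (γ - 1)⁻¹) = (γ - 1)⁻¹ by ring]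
      rw [Real.mul_rpow (by positivity) (Real.rpow_nonneg (hρpos q hq).le _)]
      rw [← Real.rpow_mul (hρpos q hq).le, mul_inv_cancel₀ (by positivity : γ - (1:ℝ) ≠ 0), Real.rpow_one]
    rw [hdd, hck, show -(γ-1)⁻¹ = -((γ-1)⁻¹) from rfl, Real.rpow_neg hgs.le]
    have huv : u q ^ 2 + v q ^ 2 = u q * u q + v q * v q := by ring
    rw [huv] at hq2pos ⊢
    field_simp
  have hfeq : fderiv ℝ (fun q => dd (fun r => σ r + A r) s q /
        sound γ ρ s q ^ ((γ + 1) / (γ - 1))) p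
      = fderiv ℝ (fun q => (u q * pdy s q - v q * pdx s q) * (ρ q * (u q * u q + v q * v q))⁻¹ *
        (γ * s q) ^ (-(γ - 1)⁻¹)) p :=
    Filter.EventuallyEq.fderiv_eq
      (Filter.eventuallyEq_of_mem (hU.mem_nhds hp) (fun q hq => key q hq))
  have hρp : 0 < ρ p := hρpos p hp
  have hsp : 0 < s p := hspos p hp
  have hq2pos : 0 < u p * u p + v p * v p := by
    have h1 : 0 < sound γ ρ s p := by
      apply Real.sqrt_pos.2
      have h2 := Real.rpow_pos_of_pos hρp (γ - 1)
      positivity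
    nlinarith [hsup p hp]
  have main : u p * fderiv ℝ (fun q => (u q * pdy s q - v q * pdx s q) * (ρ q * (u q * u q + v q * v q))⁻¹ *
        (γ * s q) ^ (-(γ - 1)⁻¹)) p (1,0)
      + v p * fderiv ℝ (fun q => (u q * pdy s q - v q * pdx s q) * (ρ q * (u q * u q + v q * v q))⁻¹ *
        (γ * s q) ^ (-(γ - 1)⁻¹)) p (0,1) = 0 := by
    have hpU : U ∈ nhds p := hU.mem_nhds hp
    have hu2 : ContDiffAt ℝ 2 u p := (hu p hp).contDiffAt hpU
    have hv2 : ContDiffAt ℝ 2 v p := (hv p hp).contDiffAt hpU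
    have hρ2 : ContDiffAt ℝ 2 ρ p := (hρ p hp).contDiffAt hpU
    have hs2 : ContDiffAt ℝ 2 s p := (hs p hp).contDiffAt hpU
    have hud : DifferentiableAt ℝ u p := hu2.differentiableAt two_ne_zero
    have hvd : DifferentiableAt ℝ v p := hv2.differentiableAt two_ne_zero
    have hρd : DifferentiableAt ℝ ρ p := hρ2.differentiableAt two_ne_zero
    have hsd : DifferentiableAt ℝ s p := hs2.differentiableAt two_ne_zero
    -- differentiability of pdx s, pdy s
    have hs1 : ContDiffAt ℝ 1 (fderiv ℝ s) p := hs2.fderiv_right le_rfl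
    have hsxd : DifferentiableAt ℝ (pdx s) p := by
      exact (hs1.differentiableAt one_ne_zero).clm_apply (differentiableAt_const _)
    have hsyd : DifferentiableAt ℝ (pdy s) p := by
      exact (hs1.differentiableAt one_ne_zero).clm_apply (differentiableAt_const _)
    -- second derivative symmetry
    have hsymm : IsSymmSndFDerivAt ℝ s p := hs2.isSymmSndFDerivAt (by simp [minSmoothness_of_isRCLikeNormedField])
    have hDSX : fderiv ℝ (pdx s) p = (fderiv ℝ (fderiv ℝ s) p).flip (1, 0) := by
      have := fderiv_clm_apply (hs1.differentiableAt one_ne_zero)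
        (differentiableAt_const ((1:ℝ), (0:ℝ)))
      simp at this; exact this
    have hDSY : fderiv ℝ (pdy s) p = (fderiv ℝ (fderiv ℝ s) p).flip (0, 1) := by
      have := fderiv_clm_apply (hs1.differentiableAt one_ne_zero)
        (differentiableAt_const ((0:ℝ), (1:ℝ)))
      simp at this; exact this
    have hSM : fderiv ℝ (pdx s) p (0, 1) = fderiv ℝ (pdy s) p (1, 0) := by
      rw [hDSX, hDSY]
      exact hsymm (0,1) (1,0)
    -- entropy equation differentiated
    have hEfun : (fun q => u q * pdx s q + v q * pdy s q) =ᶠ[nhds p] (fun _ => (0:ℝ)) :=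
      Filter.eventuallyEq_of_mem hpU (fun q hq => hent q hq)
    have hE0 : fderiv ℝ (fun q => u q * pdx s q + v q * pdy s q) p = 0 := by
      rw [hEfun.fderiv_eq]
      exact fderiv_const_apply 0
    have hE1 : fderiv ℝ (fun q => u q * pdx s q + v q * pdy s q) p
        = (u p • fderiv ℝ (pdx s) p + pdx s p • fderiv ℝ u p)
          + (v p • fderiv ℝ (pdy s) p + pdy s p • fderiv ℝ v p) := by
      rw [fderiv_fun_add (f := fun q => u q * pdx s q) (g := fun q => v q * pdy s q) (hud.mul hsxd) (hvd.mul hsyd), fderiv_fun_mul hud hsxd, fderiv_fun_mul hvd hsyd]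
    have hEx : u p * fderiv ℝ (pdx s) p (1,0) + fderiv ℝ s p (1,0) * fderiv ℝ u p (1,0)
        + (v p * fderiv ℝ (pdy s) p (1,0) + fderiv ℝ s p (0,1) * fderiv ℝ v p (1,0)) = 0 := by
      have := congrArg (fun (L : ℝ × ℝ →L[ℝ] ℝ) => L (1,0)) (hE1.symm.trans hE0)
      simpa [pdx, pdy, smul_eq_mul] using this
    have hEy : u p * fderiv ℝ (pdy s) p (1,0) + fderiv ℝ s p (1,0) * fderiv ℝ u p (0,1)
        + (v p * fderiv ℝ (pdy s) p (0,1) + fderiv ℝ s p (0,1) * fderiv ℝ v p (0,1)) = 0 := by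
      rw [← hSM]
      have := congrArg (fun (L : ℝ × ℝ →L[ℝ] ℝ) => L (0,1)) (hE1.symm.trans hE0)
      simpa [pdx, pdy, smul_eq_mul] using this
    -- mass equation in scalar form
    have hm : ρ p * fderiv ℝ u p (1,0) + u p * fderiv ℝ ρ p (1,0)
        + (ρ p * fderiv ℝ v p (0,1) + v p * fderiv ℝ ρ p (0,1)) = 0 := by
      have h1 : pdx (fun q => ρ q * u q) p
          = ρ p * fderiv ℝ u p (1,0) + u p * fderiv ℝ ρ p (1,0) := by
        simp [pdx, fderiv_fun_mul hρd hud, smul_eq_mul]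
      have h2 : pdy (fun q => ρ q * v q) p
          = ρ p * fderiv ℝ v p (0,1) + v p * fderiv ℝ ρ p (0,1) := by
        simp [pdy, fderiv_fun_mul hρd hvd, smul_eq_mul]
      have := hmass p hp
      rw [h1, h2] at this
      exact this
    have HE : u p * fderiv ℝ s p (1,0) + v p * fderiv ℝ s p (0,1) = 0 := by
      simpa [pdx, pdy] using hent p hp
    -- HasFDerivAt chain for G
    have hMne : ρ p * (u p * u p + v p * v p) ≠ 0 := by positivity
    have hgs : γ * s p ≠ 0 := by positivity
    have hW : HasFDerivAt (fun q => u q * pdy s q - v q * pdx s q)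
        ((u p • fderiv ℝ (pdy s) p + pdy s p • fderiv ℝ u p)
          - (v p • fderiv ℝ (pdx s) p + pdx s p • fderiv ℝ v p)) p :=
      (hud.hasFDerivAt.mul hsyd.hasFDerivAt).sub (hvd.hasFDerivAt.mul hsxd.hasFDerivAt)
    have hQ2' : HasFDerivAt (fun q => u q * u q + v q * v q)
        ((u p • fderiv ℝ u p + u p • fderiv ℝ u p)
          + (v p • fderiv ℝ v p + v p • fderiv ℝ v p)) p :=
      (hud.hasFDerivAt.mul hud.hasFDerivAt).add (hvd.hasFDerivAt.mul hvd.hasFDerivAt)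
    have hM : HasFDerivAt (fun q => ρ q * (u q * u q + v q * v q))
        (ρ p • ((u p • fderiv ℝ u p + u p • fderiv ℝ u p)
          + (v p • fderiv ℝ v p + v p • fderiv ℝ v p))
          + (u p * u p + v p * v p) • fderiv ℝ ρ p) p :=
      hρd.hasFDerivAt.mul hQ2'
    have hMinv : HasFDerivAt (fun q => (ρ q * (u q * u q + v q * v q))⁻¹)
        ((-((ρ p * (u p * u p + v p * v p)) ^ 2)⁻¹)
          • (ρ p • ((u p • fderiv ℝ u p + u p • fderiv ℝ u p)
              + (v p • fderiv ℝ v p + v p • fderiv ℝ v p))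
            + (u p * u p + v p * v p) • fderiv ℝ ρ p)) p :=
      (hasDerivAt_inv hMne).comp_hasFDerivAt p hM
    have hT : HasFDerivAt (fun q => (γ * s q) ^ (-(γ - 1)⁻¹))
        (((-(γ - 1)⁻¹) * (γ * s p) ^ ((-(γ - 1)⁻¹) - 1)) • (γ • fderiv ℝ s p)) p :=
      (hsd.hasFDerivAt.const_mul γ).rpow_const (Or.inl hgs)
    have hG := (hW.mul hMinv).mul hT
    have hGX := congrArg (fun (L : ℝ × ℝ →L[ℝ] ℝ) => L (1,0)) hG.fderiv
    have hGY := congrArg (fun (L : ℝ × ℝ →L[ℝ] ℝ) => L (0,1)) hG.fderiv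
    simp only [ContinuousLinearMap.add_apply, ContinuousLinearMap.coe_smul',
      Pi.smul_apply, smul_eq_mul, ContinuousLinearMap.coe_sub', Pi.sub_apply, pdx, pdy, Pi.mul_def] at hGX hGY
    show u p * fderiv ℝ (fun q => (u q * pdy s q - v q * pdx s q) *
          (ρ q * (u q * u q + v q * v q))⁻¹ * (γ * s q) ^ (-(γ - 1)⁻¹)) p (1,0)
      + v p * fderiv ℝ (fun q => (u q * pdy s q - v q * pdx s q) *
          (ρ q * (u q * u q + v q * v q))⁻¹ * (γ * s q) ^ (-(γ - 1)⁻¹)) p (0,1) = 0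
    simp only [pdx, pdy]
    rw [hGX, hGY, hSM]
    rw [show ((ρ p * (u p * u p + v p * v p)) ^ 2)⁻¹
        = (ρ p * (u p * u p + v p * v p))⁻¹ * (ρ p * (u p * u p + v p * v p))⁻¹
        from by rw [sq, mul_inv]]
    have hinv : (ρ p * (u p * u p + v p * v p)) * (ρ p * (u p * u p + v p * v p))⁻¹ = 1 :=
      mul_inv_cancel₀ hMne
    have hkey : (ρ p * (u p * u p + v p * v p)) *
        (u p * (u p * fderiv ℝ (pdy s) p (1,0) + fderiv ℝ s p (0,1) * fderiv ℝ u p (1,0)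
            - (v p * fderiv ℝ (pdx s) p (1,0) + fderiv ℝ s p (1,0) * fderiv ℝ v p (1,0)))
          + v p * (u p * fderiv ℝ (pdy s) p (0,1) + fderiv ℝ s p (0,1) * fderiv ℝ u p (0,1)
            - (v p * fderiv ℝ (pdy s) p (1,0) + fderiv ℝ s p (1,0) * fderiv ℝ v p (0,1))))
        = (u p * fderiv ℝ s p (0,1) - v p * fderiv ℝ s p (1,0)) *
        (u p * (ρ p * (u p * fderiv ℝ u p (1,0) + u p * fderiv ℝ u p (1,0)
              + (v p * fderiv ℝ v p (1,0) + v p * fderiv ℝ v p (1,0)))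
            + (u p * u p + v p * v p) * fderiv ℝ ρ p (1,0))
          + v p * (ρ p * (u p * fderiv ℝ u p (0,1) + u p * fderiv ℝ u p (0,1)
              + (v p * fderiv ℝ v p (0,1) + v p * fderiv ℝ v p (0,1)))
            + (u p * u p + v p * v p) * fderiv ℝ ρ p (0,1))) := by
      linear_combination
        (ρ p * (u p * u p + v p * v p)) * u p * hEy
        - (ρ p * (u p * u p + v p * v p)) * v p * hEx
        + ρ p * (u p * u p + v p * v p) * (fderiv ℝ u p (0,1) - fderiv ℝ v p (1,0)) * HE
        - (u p * u p + v p * v p)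
            * (u p * fderiv ℝ s p (0,1) - v p * fderiv ℝ s p (1,0)) * hm
        - 2 * ρ p * (u p * (u p * fderiv ℝ u p (0,1) + v p * fderiv ℝ v p (0,1))
            - v p * (u p * fderiv ℝ u p (1,0) + v p * fderiv ℝ v p (1,0))) * HE
    linear_combination
      ((u p * fderiv ℝ s p (0,1) - v p * fderiv ℝ s p (1,0))
          * (ρ p * (u p * u p + v p * v p))⁻¹ * (-(γ - 1)⁻¹) * (γ * s p) ^ ((-(γ - 1)⁻¹) - 1) * γ) * HE
      + ((γ * s p) ^ (-(γ - 1)⁻¹) * (ρ p * (u p * u p + v p * v p))⁻¹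
          * (ρ p * (u p * u p + v p * v p))⁻¹) * hkey
      - ((γ * s p) ^ (-(γ - 1)⁻¹) * (ρ p * (u p * u p + v p * v p))⁻¹
          * (u p * (u p * fderiv ℝ (pdy s) p (1,0) + fderiv ℝ s p (0,1) * fderiv ℝ u p (1,0)
              - (v p * fderiv ℝ (pdx s) p (1,0) + fderiv ℝ s p (1,0) * fderiv ℝ v p (1,0)))
            + v p * (u p * fderiv ℝ (pdy s) p (0,1) + fderiv ℝ s p (0,1) * fderiv ℝ u p (0,1)
              - (v p * fderiv ℝ (pdy s) p (1,0) + fderiv ℝ s p (1,0) * fderiv ℝ v p (0,1)))))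
          * hinv
  have hQpos : 0 < speed u v p := Real.sqrt_pos.2 (by nlinarith)
  have hcos : Real.cos (σ p) = u p / speed u v p := by
    rw [huσ p hp]; field_simp
  have hsin : Real.sin (σ p) = v p / speed u v p := by
    rw [hvσ p hp]; field_simp
  have hpdx : pdx (fun q => dd (fun r => σ r + A r) s q /
        sound γ ρ s q ^ ((γ + 1) / (γ - 1))) p = fderiv ℝ (fun q => (u q * pdy s q - v q * pdx s q) * (ρ q * (u q * u q + v q * v q))⁻¹ *
        (γ * s q) ^ (-(γ - 1)⁻¹)) p (1, 0) := by
    exact congrArg (fun (L : ℝ × ℝ →L[ℝ] ℝ) => L (1, 0)) hfeq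
  have hpdy : pdy (fun q => dd (fun r => σ r + A r) s q /
        sound γ ρ s q ^ ((γ + 1) / (γ - 1))) p = fderiv ℝ (fun q => (u q * pdy s q - v q * pdx s q) * (ρ q * (u q * u q + v q * v q))⁻¹ *
        (γ * s q) ^ (-(γ - 1)⁻¹)) p (0, 1) := by
    exact congrArg (fun (L : ℝ × ℝ →L[ℝ] ℝ) => L (0, 1)) hfeq
  show Real.cos (σ p) * pdx (fun q => dd (fun r => σ r + A r) s q /
        sound γ ρ s q ^ ((γ + 1) / (γ - 1))) p
      + Real.sin (σ p) * pdy (fun q => dd (fun r => σ r + A r) s q /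
        sound γ ρ s q ^ ((γ + 1) / (γ - 1))) p = 0
  rw [hpdx, hpdy, hcos, hsin, div_mul_eq_mul_div, div_mul_eq_mul_div,
    ← add_div, div_eq_zero_iff]
  exact Or.inl main

end
end

section
/- Let (u, v, ρ, s) be a C² supersonic solution of the smooth-flow 2D steady full Euler system on U, with flow angle σ, Mach angle A ∈ (0, π/2), α = σ + A, and ω = u_y − vₓ. Then on U: ∂₀(ω/ρ) = −(∂₊s / c^{(γ+1)/(γ−1)}) · (sγ)^{1/(γ−1)} / (γ(γ−1)s) · ∂₀(c²). -/
open Real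

noncomputable section

lemma fd_congr_on {f g : ℝ × ℝ → ℝ} {U : Set (ℝ × ℝ)} (hU : IsOpen U) {p : ℝ × ℝ} (hp : p ∈ U)
    (h : ∀ q ∈ U, f q = g q) : fderiv ℝ f p = fderiv ℝ g p :=
  Filter.EventuallyEq.fderiv_eq (Filter.eventually_of_mem (hU.mem_nhds hp) h)

lemma fd_zero_on {f : ℝ × ℝ → ℝ} {U : Set (ℝ × ℝ)} (hU : IsOpen U) {p : ℝ × ℝ} (hp : p ∈ U)
    (h : ∀ q ∈ U, f q = 0) (w : ℝ × ℝ) : fderiv ℝ f p w = 0 := by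
  rw [fd_congr_on hU hp (g := fun _ => (0:ℝ)) h]
  simp

variable {f g : ℝ × ℝ → ℝ} {p w : ℝ × ℝ}

lemma fdw_add (hf : DifferentiableAt ℝ f p) (hg : DifferentiableAt ℝ g p) :
    fderiv ℝ (fun q => f q + g q) p w = fderiv ℝ f p w + fderiv ℝ g p w := by
  rw [fderiv_fun_add hf hg]; rfl

lemma fdw_sub (hf : DifferentiableAt ℝ f p) (hg : DifferentiableAt ℝ g p) :
    fderiv ℝ (fun q => f q - g q) p w = fderiv ℝ f p w - fderiv ℝ g p w := by
  rw [fderiv_fun_sub hf hg]; rfl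

lemma fdw_mul (hf : DifferentiableAt ℝ f p) (hg : DifferentiableAt ℝ g p) :
    fderiv ℝ (fun q => f q * g q) p w = f p * fderiv ℝ g p w + g p * fderiv ℝ f p w := by
  rw [fderiv_fun_mul hf hg]
  simp [smul_eq_mul]

lemma fdw_const_mul (c : ℝ) (hf : DifferentiableAt ℝ f p) :
    fderiv ℝ (fun q => c * f q) p w = c * fderiv ℝ f p w := by
  rw [fderiv_const_mul hf c]; rfl

lemma fdw_inv (hf : DifferentiableAt ℝ f p) (h0 : f p ≠ 0) :
    fderiv ℝ (fun q => (f q)⁻¹) p w = -(f p ^ 2)⁻¹ * fderiv ℝ f p w := by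
  have h := (hasDerivAt_inv h0).comp_hasFDerivAt p hf.hasFDerivAt
  have h' : HasFDerivAt (fun q => (f q)⁻¹) (-(f p ^ 2)⁻¹ • fderiv ℝ f p) p := h
  rw [h'.fderiv]
  simp [smul_eq_mul]

lemma fdw_rpow (hf : DifferentiableAt ℝ f p) (h0 : 0 < f p) (γ : ℝ) :
    fderiv ℝ (fun q => f q ^ γ) p w = γ * f p ^ (γ - 1) * fderiv ℝ f p w := by
  have h := (Real.hasDerivAt_rpow_const (x := f p) (p := γ) (Or.inl h0.ne')).comp_hasFDerivAt p
    hf.hasFDerivAt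
  have h' : HasFDerivAt (fun q => f q ^ γ) ((γ * f p ^ (γ - 1)) • fderiv ℝ f p) p := h
  rw [h'.fderiv]
  simp [smul_eq_mul]

lemma diffAt_fd {u : ℝ × ℝ → ℝ} (hu : ContDiffAt ℝ 2 u p) (w : ℝ × ℝ) :
    DifferentiableAt ℝ (fun q => fderiv ℝ u q w) p := by
  have h1 : ContDiffAt ℝ 1 (fderiv ℝ u) p := hu.fderiv_right (by norm_num)
  exact ((ContinuousLinearMap.apply ℝ ℝ w).differentiable.differentiableAt).comp p
    (h1.differentiableAt (by norm_num))

lemma fd_fd_apply {u : ℝ × ℝ → ℝ} (hu : ContDiffAt ℝ 2 u p) (v w : ℝ × ℝ) :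
    fderiv ℝ (fun q => fderiv ℝ u q w) p v = fderiv ℝ (fderiv ℝ u) p v w := by
  have h1 : ContDiffAt ℝ 1 (fderiv ℝ u) p := hu.fderiv_right (by norm_num)
  have hd : DifferentiableAt ℝ (fderiv ℝ u) p := h1.differentiableAt (by norm_num)
  have : (fun q => fderiv ℝ u q w) = (ContinuousLinearMap.apply ℝ ℝ w) ∘ (fderiv ℝ u) := rfl
  rw [this, fderiv_comp p ((ContinuousLinearMap.apply ℝ ℝ w).differentiable.differentiableAt) hd]
  simp

lemma fd_swap {u : ℝ × ℝ → ℝ} (hu : ContDiffAt ℝ 2 u p) (v w : ℝ × ℝ) :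
    fderiv ℝ (fun q => fderiv ℝ u q w) p v = fderiv ℝ (fun q => fderiv ℝ u q v) p w := by
  rw [fd_fd_apply hu v w, fd_fd_apply hu w v]
  exact (hu.isSymmSndFDerivAt (by norm_num)) v w

/-- `∂₀(ω/ρ) = −(∂₊s / c^((γ+1)/(γ−1))) · (sγ)^(1/(γ−1)) / (γ(γ−1)s) · ∂₀(c²)`. -/
theorem stmt_11 (γ : ℝ) (hγ : 1 < γ) (U : Set (ℝ × ℝ)) (hU : IsOpen U)
    (u v ρ s σ A : ℝ × ℝ → ℝ)
    (hu : ContDiffOn ℝ 2 u U) (hv : ContDiffOn ℝ 2 v U)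
    (hρ : ContDiffOn ℝ 2 ρ U) (hs : ContDiffOn ℝ 2 s U)
    (hσ : ContDiffOn ℝ 1 σ U) (hA : ContDiffOn ℝ 1 A U)
    (hρpos : ∀ p ∈ U, 0 < ρ p) (hspos : ∀ p ∈ U, 0 < s p)
    (hmass : ∀ p ∈ U, pdx (fun q => ρ q * u q) p + pdy (fun q => ρ q * v q) p = 0)
    (hmomx : ∀ p ∈ U,
      u p * pdx u p + v p * pdy u p + (ρ p)⁻¹ * pdx (fun q => s q * ρ q ^ γ) p = 0)
    (hmomy : ∀ p ∈ U,
      u p * pdx v p + v p * pdy v p + (ρ p)⁻¹ * pdy (fun q => s q * ρ q ^ γ) p = 0)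
    (hent : ∀ p ∈ U, u p * pdx s p + v p * pdy s p = 0)
    (hsup : ∀ p ∈ U, (sound γ ρ s p) ^ 2 < u p ^ 2 + v p ^ 2)
    (huσ : ∀ p ∈ U, u p = speed u v p * Real.cos (σ p))
    (hvσ : ∀ p ∈ U, v p = speed u v p * Real.sin (σ p))
    (hsinA : ∀ p ∈ U, Real.sin (A p) = sound γ ρ s p / speed u v p)
    (hA0 : ∀ p ∈ U, 0 < A p) (hA2 : ∀ p ∈ U, A p < Real.pi / 2)
    :
    ∀ p ∈ U,
      dd σ (fun q => vort u v q / ρ q) p =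
        -((dd (fun r => σ r + A r) s p / sound γ ρ s p ^ ((γ + 1) / (γ - 1))) *
            ((s p * γ) ^ (1 / (γ - 1)) / (γ * (γ - 1) * s p)) *
            dd σ (fun q => sound γ ρ s q ^ 2) p) := by
  intro p hp
  have hγ0 : (0:ℝ) < γ := lt_trans one_pos hγ
  have hγ1 : (0:ℝ) < γ - 1 := by linarith
  have hρp := hρpos p hp
  have hsp := hspos p hp
  have hmem := hU.mem_nhds hp
  have hu2 : ContDiffAt ℝ 2 u p := hu.contDiffAt hmem
  have hv2 : ContDiffAt ℝ 2 v p := hv.contDiffAt hmem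
  have hρ2 : ContDiffAt ℝ 2 ρ p := hρ.contDiffAt hmem
  have hs2 : ContDiffAt ℝ 2 s p := hs.contDiffAt hmem
  have du : DifferentiableAt ℝ u p := hu2.differentiableAt (by norm_num)
  have dv : DifferentiableAt ℝ v p := hv2.differentiableAt (by norm_num)
  have dρ : DifferentiableAt ℝ ρ p := hρ2.differentiableAt (by norm_num)
  have ds : DifferentiableAt ℝ s p := hs2.differentiableAt (by norm_num)
  have dinv : DifferentiableAt ℝ (fun q => (ρ q)⁻¹) p := dρ.inv hρp.ne'
  have hP2 : ContDiffAt ℝ 2 (fun q => s q * ρ q ^ γ) p :=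
    hs2.mul (hρ2.rpow_const_of_ne hρp.ne')
  have dux : DifferentiableAt ℝ (fun q => fderiv ℝ u q (1, 0)) p := diffAt_fd hu2 _
  have duy : DifferentiableAt ℝ (fun q => fderiv ℝ u q (0, 1)) p := diffAt_fd hu2 _
  have dvx : DifferentiableAt ℝ (fun q => fderiv ℝ v q (1, 0)) p := diffAt_fd hv2 _
  have dvy : DifferentiableAt ℝ (fun q => fderiv ℝ v q (0, 1)) p := diffAt_fd hv2 _
  have dPx : DifferentiableAt ℝ (fun q => fderiv ℝ (fun r => s r * ρ r ^ γ) q (1, 0)) p :=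
    diffAt_fd hP2 _
  have dPy : DifferentiableAt ℝ (fun q => fderiv ℝ (fun r => s r * ρ r ^ γ) q (0, 1)) p :=
    diffAt_fd hP2 _
  -- positivity facts
  have hc2pos : 0 < γ * s p * ρ p ^ (γ - 1) := by positivity
  have hcpos : 0 < sound γ ρ s p := Real.sqrt_pos.mpr hc2pos
  have hcsq : sound γ ρ s p ^ 2 = γ * s p * ρ p ^ (γ - 1) := Real.sq_sqrt hc2pos.le
  have hq2pos : 0 < u p ^ 2 + v p ^ 2 := lt_trans (pow_pos hcpos 2) (hsup p hp)
  have hqpos : 0 < speed u v p := Real.sqrt_pos.mpr hq2pos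
  -- mass equation at p
  have e1 : ρ p * fderiv ℝ u p (1,0) + u p * fderiv ℝ ρ p (1,0)
      + (ρ p * fderiv ℝ v p (0,1) + v p * fderiv ℝ ρ p (0,1)) = 0 := by
    have h := hmass p hp
    simp only [pdx, pdy] at h
    rw [fdw_mul dρ du, fdw_mul dρ dv] at h
    linarith
  -- entropy equation at p
  have e2 : u p * fderiv ℝ s p (1,0) + v p * fderiv ℝ s p (0,1) = 0 := by
    simpa [pdx, pdy] using hent p hp
  have e2' : Real.cos (σ p) * fderiv ℝ s p (1,0) + Real.sin (σ p) * fderiv ℝ s p (0,1) = 0 := by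
    have h := e2
    rw [huσ p hp, hvσ p hp] at h
    apply mul_left_cancel₀ hqpos.ne'
    rw [mul_zero]
    linear_combination h
  -- expansion of pressure derivatives
  have ePx : fderiv ℝ (fun r => s r * ρ r ^ γ) p (1,0)
      = s p * (γ * ρ p ^ (γ-1) * fderiv ℝ ρ p (1,0)) + ρ p ^ γ * fderiv ℝ s p (1,0) := by
    rw [fdw_mul ds (dρ.rpow_const (Or.inl hρp.ne')), fdw_rpow dρ hρp γ]
  have ePy : fderiv ℝ (fun r => s r * ρ r ^ γ) p (0,1)
      = s p * (γ * ρ p ^ (γ-1) * fderiv ℝ ρ p (0,1)) + ρ p ^ γ * fderiv ℝ s p (0,1) := by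
    rw [fdw_mul ds (dρ.rpow_const (Or.inl hρp.ne')), fdw_rpow dρ hρp γ]
  -- differentiated x-momentum in y-direction
  have e3 : fderiv ℝ (fun q => u q * fderiv ℝ u q (1,0) + v q * fderiv ℝ u q (0,1)
      + (ρ q)⁻¹ * fderiv ℝ (fun r => s r * ρ r ^ γ) q (1,0)) p (0,1) = 0 := by
    apply fd_zero_on hU hp
    intro q hq
    simpa [pdx, pdy] using hmomx q hq
  rw [fdw_add ((du.fun_mul dux).fun_add (dv.fun_mul duy)) (dinv.fun_mul dPx),
      fdw_add (du.fun_mul dux) (dv.fun_mul duy),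
      fdw_mul du dux, fdw_mul dv duy, fdw_mul dinv dPx,
      fdw_inv dρ hρp.ne',
      fd_swap hu2 (0,1) (1,0)] at e3
  -- differentiated y-momentum in x-direction
  have e4 : fderiv ℝ (fun q => u q * fderiv ℝ v q (1,0) + v q * fderiv ℝ v q (0,1)
      + (ρ q)⁻¹ * fderiv ℝ (fun r => s r * ρ r ^ γ) q (0,1)) p (1,0) = 0 := by
    apply fd_zero_on hU hp
    intro q hq
    simpa [pdx, pdy] using hmomy q hq
  rw [fdw_add ((du.fun_mul dvx).fun_add (dv.fun_mul dvy)) (dinv.fun_mul dPy),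
      fdw_add (du.fun_mul dvx) (dv.fun_mul dvy),
      fdw_mul du dvx, fdw_mul dv dvy, fdw_mul dinv dPy,
      fdw_inv dρ hρp.ne',
      fd_swap hP2 (1,0) (0,1)] at e4
  -- derivatives of vorticity / density
  have dω : DifferentiableAt ℝ (fun q => fderiv ℝ u q (0,1) - fderiv ℝ v q (1,0)) p :=
    duy.sub dvx
  have eωx : fderiv ℝ (fun q => vort u v q / ρ q) p (1,0)
      = (fderiv ℝ u p (0,1) - fderiv ℝ v p (1,0)) * (-(ρ p ^ 2)⁻¹ * fderiv ℝ ρ p (1,0))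
        + (ρ p)⁻¹ * (fderiv ℝ (fun q => fderiv ℝ u q (0,1)) p (1,0)
            - fderiv ℝ (fun q => fderiv ℝ v q (1,0)) p (1,0)) := by
    simp only [vort, pdx, pdy, div_eq_mul_inv]
    rw [fdw_mul dω dinv, fdw_inv dρ hρp.ne', fdw_sub duy dvx]
  have eωy : fderiv ℝ (fun q => vort u v q / ρ q) p (0,1)
      = (fderiv ℝ u p (0,1) - fderiv ℝ v p (1,0)) * (-(ρ p ^ 2)⁻¹ * fderiv ℝ ρ p (0,1))
        + (ρ p)⁻¹ * (fderiv ℝ (fun q => fderiv ℝ u q (0,1)) p (0,1)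
            - fderiv ℝ (fun q => fderiv ℝ v q (0,1)) p (1,0)) := by
    simp only [vort, pdx, pdy, div_eq_mul_inv]
    rw [fdw_mul dω dinv, fdw_inv dρ hρp.ne', fdw_sub duy dvx,
        fd_swap hv2 (0,1) (1,0)]
  -- derivatives of sound speed squared
  have ec2 : ∀ w : ℝ × ℝ, fderiv ℝ (fun q => sound γ ρ s q ^ 2) p w
      = γ * (s p * ((γ-1) * ρ p ^ (γ-2) * fderiv ℝ ρ p w) + ρ p ^ (γ-1) * fderiv ℝ s p w) := by
    intro w
    have hcong : fderiv ℝ (fun q => sound γ ρ s q ^ 2) p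
        = fderiv ℝ (fun q => γ * (s q * ρ q ^ (γ-1))) p := by
      apply fd_congr_on hU hp
      intro q hq
      have h1 := hρpos q hq
      have h2 := hspos q hq
      rw [sound, Real.sq_sqrt (by positivity)]
      ring
    rw [hcong, fdw_const_mul γ (ds.fun_mul (dρ.rpow_const (Or.inl hρp.ne'))),
        fdw_mul ds (dρ.rpow_const (Or.inl hρp.ne')), fdw_rpow dρ hρp (γ-1),
        show γ - 1 - 1 = γ - 2 by ring]
  -- unfold goal
  simp only [dd, pdx, pdy]
  rw [eωx, eωy, ec2 (1,0), ec2 (0,1), Real.cos_add, Real.sin_add, hsinA p hp]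
  have huσp := huσ p hp
  have hvσp := hvσ p hp
  set C := sound γ ρ s p with hC
  set Q := speed u v p with hQ
  set cσ := Real.cos (σ p) with hcσ
  set sσ := Real.sin (σ p) with hsσ
  set cA := Real.cos (A p) with hcA
  set U0 := u p with hU0
  set V0 := v p with hV0
  set R0 := ρ p with hR0
  set S0 := s p with hS0
  set ux := fderiv ℝ u p (1,0) with hux
  set uy := fderiv ℝ u p (0,1) with huy
  set vx := fderiv ℝ v p (1,0) with hvx
  set vy := fderiv ℝ v p (0,1) with hvy
  set ρx := fderiv ℝ ρ p (1,0) with hρx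
  set ρy := fderiv ℝ ρ p (0,1) with hρy
  set sx := fderiv ℝ s p (1,0) with hsx
  set sy := fderiv ℝ s p (0,1) with hsy
  set a1 := fderiv ℝ (fun q => fderiv ℝ u q (0,1)) p (1,0) with ha1
  set a2 := fderiv ℝ (fun q => fderiv ℝ u q (0,1)) p (0,1) with ha2
  set b1 := fderiv ℝ (fun q => fderiv ℝ v q (1,0)) p (1,0) with hb1
  set b2 := fderiv ℝ (fun q => fderiv ℝ v q (0,1)) p (1,0) with hb2
  set Pc := fderiv ℝ (fun q => fderiv ℝ (fun r => s r * ρ r ^ γ) q (1,0)) p (0,1) with hPc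
  set Px0 := fderiv ℝ (fun r => s r * ρ r ^ γ) p (1,0) with hPx0
  set Py0 := fderiv ℝ (fun r => s r * ρ r ^ γ) p (0,1) with hPy0
  set R1 := R0 ^ (γ-1) with hR1
  set R2 := R0 ^ (γ-2) with hR2
  set Rg := R0 ^ γ with hRg
  set T := (S0 * γ) ^ (1/(γ-1)) with hT
  have hR00 : (R0:ℝ) ≠ 0 := hρp.ne'
  have hQ0 : (Q:ℝ) ≠ 0 := hqpos.ne'
  have hC0 : (C:ℝ) ≠ 0 := hcpos.ne'
  have hS00 : (S0:ℝ) ≠ 0 := hsp.ne'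
  have hγ10 : γ - 1 ≠ 0 := hγ1.ne'
  have hγ00 : γ ≠ 0 := hγ0.ne'
  have hR12 : R1 = R2 * R0 := by
    rw [hR1, hR2, show γ - 1 = (γ-2) + 1 by ring, Real.rpow_add_one hR00]
  have hRg2 : Rg = R1 * R0 := by
    rw [hRg, hR1, show γ = (γ-1) + 1 by ring, Real.rpow_add_one hR00]
    norm_num
  have hTpos : (0:ℝ) < T := by rw [hT]; positivity
  have hT0 : (T:ℝ) ≠ 0 := hTpos.ne'
  have hKey : C ^ ((γ + 1)/(γ - 1)) = C * T * R0 := by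
    rw [show (γ+1)/(γ-1) = 1 + 2 * (1/(γ-1)) by field_simp; ring,
        Real.rpow_add hcpos, Real.rpow_one, Real.rpow_mul hcpos.le,
        show (2:ℝ) = ((2:ℕ):ℝ) by norm_num, Real.rpow_natCast, hcsq,
        show γ * S0 * R1 = (S0*γ) * R1 by ring,
        Real.mul_rpow (by positivity) (by rw [hR1]; positivity),
        hR1, ← Real.rpow_mul hρp.le, mul_one_div_cancel hγ10, Real.rpow_one, ← hT]
    ring
  have pyth : sσ^2 + cσ^2 = 1 := by rw [hsσ, hcσ]; exact Real.sin_sq_add_cos_sq (σ p)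
  have cancelR0 : ∀ x : ℝ, R0 * x = 0 → x = 0 := fun x hx =>
    (mul_eq_zero.mp hx).resolve_left hR00
  have e3' : R0^2*(U0*a1 + ux*uy + V0*a2 + uy*vy) + R0*Pc - Px0*ρy = 0 := by
    field_simp at e3
    linear_combination e3
  have e4' : R0^2*(U0*b1 + vx*ux + V0*b2 + vy*vx) + R0*Pc - Py0*ρx = 0 := by
    field_simp at e4
    linear_combination e4
  have hnum : (cσ * cA - sσ * (C / Q)) * sx + (sσ * cA + cσ * (C / Q)) * sy
      = (C/Q) * (cσ * sy - sσ * sx) := by linear_combination cA * e2'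
  have hdd : cσ * (γ * (S0 * ((γ - 1) * R2 * ρx) + R1 * sx))
        + sσ * (γ * (S0 * ((γ - 1) * R2 * ρy) + R1 * sy))
      = γ*(γ-1)*S0*R2*(cσ*ρx + sσ*ρy) := by linear_combination (γ*R1)*e2'
  have key1 : cσ * ((uy - vx) * (-(R0 ^ 2)⁻¹ * ρx) + R0⁻¹ * (a1 - b1))
        + sσ * ((uy - vx) * (-(R0 ^ 2)⁻¹ * ρy) + R0⁻¹ * (a2 - b2))
      = -((cσ*sy - sσ*sx) * (cσ*ρx + sσ*ρy) * R2 / (Q*R0)) := by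
    field_simp
    rw [← sub_eq_zero]
    refine (mul_eq_zero.mp ?_).resolve_left (pow_ne_zero 2 hR00)
    linear_combination (- R0*(-((uy - vx) * ρx * R0) + (a1 - b1) * R0 ^ 2))*huσp
      + (- R0*(-((uy - vx) * ρy * R0) + (a2 - b2) * R0 ^ 2))*hvσp
      + (- R0^2*(uy - vx))*e1 + R0*e3' - R0*e4'
      + (R0*ρy)*ePx + (- R0*ρx)*ePy
      + (- R0*Rg*(sσ*ρx - cσ*ρy))*e2'
      + (R0*Rg*(sy*ρx - sx*ρy))*pyth
      + (- R0*(cσ*sy - sσ*sx)*(cσ*ρx + sσ*ρy))*hRg2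
      + (- R0^2*(cσ*sy - sσ*sx)*(cσ*ρx + sσ*ρy))*hR12
  rw [hKey, hnum, hdd, key1]
  field_simp

end
end

section
/- Let (u, v, ρ, s) be a C² solution of the smooth-flow 2D steady full Euler system on U with ρ > 0, s > 0, and let ω = u_y − vₓ, τ = 1/ρ. Then the vorticity satisfies the transport equation u ωₓ + v ω_y + (uₓ + v_y)ω + τ^{−γ}(τ_y sₓ − τₓ s_y) = 0 on U. -/
open Real Topology

noncomputable section

lemma pd_diffAt (f : ℝ × ℝ → ℝ) (p : ℝ × ℝ) (hf : ContDiffAt ℝ 2 f p) (w : ℝ × ℝ) :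
    DifferentiableAt ℝ (fun q => fderiv ℝ f q w) p := by
  have hd : DifferentiableAt ℝ (fderiv ℝ f) p :=
    (hf.fderiv_right (m := 1) (by norm_num)).differentiableAt one_ne_zero
  exact (ContinuousLinearMap.apply ℝ ℝ w).differentiableAt.comp p hd

lemma pd_pd (f : ℝ × ℝ → ℝ) (p : ℝ × ℝ) (hf : ContDiffAt ℝ 2 f p) (w v : ℝ × ℝ) :
    fderiv ℝ (fun q => fderiv ℝ f q w) p v = fderiv ℝ (fderiv ℝ f) p v w := by
  have hd : DifferentiableAt ℝ (fderiv ℝ f) p :=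
    (hf.fderiv_right (m := 1) (by norm_num)).differentiableAt one_ne_zero
  have h2 : fderiv ℝ (fun q => fderiv ℝ f q w) p
      = (ContinuousLinearMap.apply ℝ ℝ w).comp (fderiv ℝ (fderiv ℝ f) p) :=
    ((ContinuousLinearMap.apply ℝ ℝ w).hasFDerivAt.comp p hd.hasFDerivAt).fderiv
  rw [h2]; simp

lemma pd_swap (f : ℝ × ℝ → ℝ) (p : ℝ × ℝ) (hf : ContDiffAt ℝ 2 f p) :
    fderiv ℝ (fun q => fderiv ℝ f q (1,0)) p (0,1)
      = fderiv ℝ (fun q => fderiv ℝ f q (0,1)) p (1,0) := by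
  rw [pd_pd f p hf, pd_pd f p hf]
  exact (hf.isSymmSndFDerivAt (by simp)) (0,1) (1,0)

lemma pd_add (f g : ℝ × ℝ → ℝ) (p w : ℝ × ℝ) (hf : DifferentiableAt ℝ f p)
    (hg : DifferentiableAt ℝ g p) :
    fderiv ℝ (fun q => f q + g q) p w = fderiv ℝ f p w + fderiv ℝ g p w := by
  rw [fderiv_fun_add hf hg]; rfl

lemma pd_mul (f g : ℝ × ℝ → ℝ) (p w : ℝ × ℝ) (hf : DifferentiableAt ℝ f p)
    (hg : DifferentiableAt ℝ g p) :
    fderiv ℝ (fun q => f q * g q) p w = fderiv ℝ f p w * g p + f p * fderiv ℝ g p w := by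
  rw [fderiv_fun_mul hf hg]
  simp [ContinuousLinearMap.add_apply, ContinuousLinearMap.smul_apply, smul_eq_mul]
  ring

lemma pd_sub (f g : ℝ × ℝ → ℝ) (p w : ℝ × ℝ) (hf : DifferentiableAt ℝ f p)
    (hg : DifferentiableAt ℝ g p) :
    fderiv ℝ (fun q => f q - g q) p w = fderiv ℝ f p w - fderiv ℝ g p w := by
  rw [fderiv_fun_sub hf hg]; rfl


/-- the vorticity of a C² solution of the smooth-flow 2D steady full
Euler system satisfies `u ωₓ + v ω_y + (uₓ + v_y)ω + τ^(−γ)(τ_y sₓ − τₓ s_y) = 0`,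
where `τ = 1/ρ`. -/
theorem stmt_12 (γ : ℝ) (hγ : 1 < γ) (U : Set (ℝ × ℝ)) (hU : IsOpen U)
    (u v ρ s : ℝ × ℝ → ℝ)
    (hu : ContDiffOn ℝ 2 u U) (hv : ContDiffOn ℝ 2 v U)
    (hρ : ContDiffOn ℝ 2 ρ U) (hs : ContDiffOn ℝ 2 s U)
    (hρpos : ∀ p ∈ U, 0 < ρ p) (hspos : ∀ p ∈ U, 0 < s p)
    (hmass : ∀ p ∈ U, pdx (fun q => ρ q * u q) p + pdy (fun q => ρ q * v q) p = 0)
    (hmomx : ∀ p ∈ U,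
      u p * pdx u p + v p * pdy u p + (ρ p)⁻¹ * pdx (fun q => s q * ρ q ^ γ) p = 0)
    (hmomy : ∀ p ∈ U,
      u p * pdx v p + v p * pdy v p + (ρ p)⁻¹ * pdy (fun q => s q * ρ q ^ γ) p = 0)
    (hent : ∀ p ∈ U, u p * pdx s p + v p * pdy s p = 0) :
    ∀ p ∈ U,
      u p * pdx (vort u v) p + v p * pdy (vort u v) p +
        (pdx u p + pdy v p) * vort u v p +
        ((ρ p)⁻¹) ^ (-γ) *
          (pdy (fun q => (ρ q)⁻¹) p * pdx s p - pdx (fun q => (ρ q)⁻¹) p * pdy s p) = 0 := by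

  intro p hp
  have hUp : U ∈ 𝓝 p := hU.mem_nhds hp
  have hu2 : ContDiffAt ℝ 2 u p := hu.contDiffAt hUp
  have hv2 : ContDiffAt ℝ 2 v p := hv.contDiffAt hUp
  have hρ2 : ContDiffAt ℝ 2 ρ p := hρ.contDiffAt hUp
  have hs2 : ContDiffAt ℝ 2 s p := hs.contDiffAt hUp
  have hρposp := hρpos p hp
  have hρne : ρ p ≠ 0 := hρposp.ne'
  have hP2 : ContDiffAt ℝ 2 (fun q => s q * ρ q ^ γ) p :=
    hs2.mul (hρ2.rpow_const_of_ne hρne)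
  have hτ2 : ContDiffAt ℝ 2 (fun q => (ρ q)⁻¹) p := hρ2.inv hρne
  have hone : (2:WithTop ℕ∞) ≠ 0 := by norm_num
  have hud : DifferentiableAt ℝ u p := hu2.differentiableAt hone
  have hvd : DifferentiableAt ℝ v p := hv2.differentiableAt hone
  have hρd : DifferentiableAt ℝ ρ p := hρ2.differentiableAt hone
  have hsd : DifferentiableAt ℝ s p := hs2.differentiableAt hone
  have hτd : DifferentiableAt ℝ (fun q => (ρ q)⁻¹) p := hτ2.differentiableAt hone
  have huxd := pd_diffAt u p hu2 (1,0)
  have huyd := pd_diffAt u p hu2 (0,1)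
  have hvxd := pd_diffAt v p hv2 (1,0)
  have hvyd := pd_diffAt v p hv2 (0,1)
  have hPxd := pd_diffAt _ p hP2 (1,0)
  have hPyd := pd_diffAt _ p hP2 (0,1)
  -- derivative of pressure
  have hP' : HasFDerivAt (fun q => s q * ρ q ^ γ)
      (s p • ((γ * ρ p ^ (γ - 1)) • fderiv ℝ ρ p) + (ρ p ^ γ) • fderiv ℝ s p) p :=
    hsd.hasFDerivAt.mul (hρd.hasFDerivAt.rpow_const (Or.inl hρne))
  have hPw : ∀ w : ℝ × ℝ, fderiv ℝ (fun q => s q * ρ q ^ γ) p w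
      = fderiv ℝ s p w * ρ p ^ γ + s p * ((γ * ρ p ^ (γ - 1)) * fderiv ℝ ρ p w) := by
    intro w
    rw [hP'.fderiv]
    simp [ContinuousLinearMap.add_apply, ContinuousLinearMap.smul_apply, smul_eq_mul]
    ring
  -- derivative of tau
  have hτ' : HasFDerivAt (fun q => (ρ q)⁻¹) ((-(ρ p ^ 2)⁻¹) • fderiv ℝ ρ p) p :=
    (hasDerivAt_inv hρne).comp_hasFDerivAt p hρd.hasFDerivAt
  have hτw : ∀ w : ℝ × ℝ, fderiv ℝ (fun q => (ρ q)⁻¹) p w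
      = -((ρ p ^ 2)⁻¹) * fderiv ℝ ρ p w := by
    intro w
    rw [hτ'.fderiv]
    simp [ContinuousLinearMap.smul_apply, smul_eq_mul]
  -- x-momentum differentiated in y
  have hFx : (fun q => u q * fderiv ℝ u q (1,0) + v q * fderiv ℝ u q (0,1)
      + (ρ q)⁻¹ * fderiv ℝ (fun r => s r * ρ r ^ γ) q (1,0)) =ᶠ[𝓝 p] fun _ => (0:ℝ) :=
    Filter.eventuallyEq_of_mem hUp (fun q hq => hmomx q hq)
  have h1 : fderiv ℝ (fun q => u q * fderiv ℝ u q (1,0) + v q * fderiv ℝ u q (0,1)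
      + (ρ q)⁻¹ * fderiv ℝ (fun r => s r * ρ r ^ γ) q (1,0)) p (0,1) = 0 := by
    rw [hFx.fderiv_eq]; simp
  rw [pd_add _ _ _ _ ((hud.fun_mul huxd).fun_add (hvd.fun_mul huyd)) (hτd.fun_mul hPxd),
      pd_add _ _ _ _ (hud.fun_mul huxd) (hvd.fun_mul huyd),
      pd_mul _ _ _ _ hud huxd, pd_mul _ _ _ _ hvd huyd, pd_mul _ _ _ _ hτd hPxd] at h1
  -- y-momentum differentiated in x
  have hFy : (fun q => u q * fderiv ℝ v q (1,0) + v q * fderiv ℝ v q (0,1)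
      + (ρ q)⁻¹ * fderiv ℝ (fun r => s r * ρ r ^ γ) q (0,1)) =ᶠ[𝓝 p] fun _ => (0:ℝ) :=
    Filter.eventuallyEq_of_mem hUp (fun q hq => hmomy q hq)
  have h2 : fderiv ℝ (fun q => u q * fderiv ℝ v q (1,0) + v q * fderiv ℝ v q (0,1)
      + (ρ q)⁻¹ * fderiv ℝ (fun r => s r * ρ r ^ γ) q (0,1)) p (1,0) = 0 := by
    rw [hFy.fderiv_eq]; simp
  rw [pd_add _ _ _ _ ((hud.fun_mul hvxd).fun_add (hvd.fun_mul hvyd)) (hτd.fun_mul hPyd),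
      pd_add _ _ _ _ (hud.fun_mul hvxd) (hvd.fun_mul hvyd),
      pd_mul _ _ _ _ hud hvxd, pd_mul _ _ _ _ hvd hvyd, pd_mul _ _ _ _ hτd hPyd] at h2
  -- swaps
  have hswu := pd_swap u p hu2
  have hswv := pd_swap v p hv2
  have hswP := pd_swap _ p hP2
  rw [hswu, hswP, hPw (1,0), hτw (0,1)] at h1
  rw [hPw (0,1), hτw (1,0)] at h2
  -- rewrite goal
  have hvort : vort u v = fun q => fderiv ℝ u q (0,1) - fderiv ℝ v q (1,0) := rfl
  simp only [pdx, pdy, hvort]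
  rw [pd_sub _ _ _ _ huyd hvxd, pd_sub _ _ _ _ huyd hvxd, hτw (0,1), hτw (1,0)]
  rw [hswv]
  have hcoef : ((ρ p)⁻¹) ^ (-γ) = ρ p ^ γ := by
    rw [Real.inv_rpow hρposp.le, Real.rpow_neg hρposp.le, inv_inv]
  rw [hcoef]
  linear_combination h1 - h2

end
end

section
/- Let (u, v, ρ, s) be a C¹ supersonic solution of the smooth-flow 2D steady full Euler system on U, with flow angle σ, Mach angle A ∈ (0, π/2), and κ = 2/(γ−1). Then the divergence of the velocity satisfies uₓ + v_y = −(κ / sin A) ∂₀c on U. -/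
open Real

noncomputable section

/-- the divergence of the velocity field satisfies
`uₓ + v_y = −(κ / sin A) ∂₀c`, with `κ = 2/(γ−1)`. -/
theorem stmt_13 (γ : ℝ) (hγ : 1 < γ) (U : Set (ℝ × ℝ)) (hU : IsOpen U)
    (u v ρ s σ A : ℝ × ℝ → ℝ)
    (hu : ContDiffOn ℝ 1 u U) (hv : ContDiffOn ℝ 1 v U)
    (hρ : ContDiffOn ℝ 1 ρ U) (hs : ContDiffOn ℝ 1 s U)
    (hσ : ContDiffOn ℝ 1 σ U) (hA : ContDiffOn ℝ 1 A U)
    (hρpos : ∀ p ∈ U, 0 < ρ p) (hspos : ∀ p ∈ U, 0 < s p)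
    (hmass : ∀ p ∈ U, pdx (fun q => ρ q * u q) p + pdy (fun q => ρ q * v q) p = 0)
    (hmomx : ∀ p ∈ U,
      u p * pdx u p + v p * pdy u p + (ρ p)⁻¹ * pdx (fun q => s q * ρ q ^ γ) p = 0)
    (hmomy : ∀ p ∈ U,
      u p * pdx v p + v p * pdy v p + (ρ p)⁻¹ * pdy (fun q => s q * ρ q ^ γ) p = 0)
    (hent : ∀ p ∈ U, u p * pdx s p + v p * pdy s p = 0)
    (hsup : ∀ p ∈ U, (sound γ ρ s p) ^ 2 < u p ^ 2 + v p ^ 2)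
    (huσ : ∀ p ∈ U, u p = speed u v p * Real.cos (σ p))
    (hvσ : ∀ p ∈ U, v p = speed u v p * Real.sin (σ p))
    (hsinA : ∀ p ∈ U, Real.sin (A p) = sound γ ρ s p / speed u v p)
    (hA0 : ∀ p ∈ U, 0 < A p) (hA2 : ∀ p ∈ U, A p < Real.pi / 2)
    :
    ∀ p ∈ U,
      pdx u p + pdy v p =
        -((2 / (γ - 1)) / Real.sin (A p)) * dd σ (sound γ ρ s) p := by
  intro p hp
  have hpU : U ∈ nhds p := hU.mem_nhds hp
  have hud : DifferentiableAt ℝ u p := (hu.contDiffAt hpU).differentiableAt one_ne_zero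
  have hvd : DifferentiableAt ℝ v p := (hv.contDiffAt hpU).differentiableAt one_ne_zero
  have hρd : DifferentiableAt ℝ ρ p := (hρ.contDiffAt hpU).differentiableAt one_ne_zero
  have hsd : DifferentiableAt ℝ s p := (hs.contDiffAt hpU).differentiableAt one_ne_zero
  have hR : 0 < ρ p := hρpos p hp
  have hS : 0 < s p := hspos p hp
  have hγ1 : γ - 1 ≠ 0 := by linarith
  have hF : 0 < ρ p ^ (γ - 1) := Real.rpow_pos_of_pos hR _
  have hc2 : 0 < γ * s p * ρ p ^ (γ - 1) := by positivity
  have hc : 0 < sound γ ρ s p := Real.sqrt_pos.mpr hc2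
  have hq2 : 0 < u p ^ 2 + v p ^ 2 := lt_trans (pow_pos hc 2) (hsup p hp)
  have hq : 0 < speed u v p := Real.sqrt_pos.mpr hq2
  -- product rule for the mass equation
  have hmx : pdx (fun q => ρ q * u q) p = ρ p * pdx u p + u p * pdx ρ p := by
    simp only [pdx]; have hm : HasFDerivAt (fun q => ρ q * u q) (ρ p • fderiv ℝ u p + u p • fderiv ℝ ρ p) p := hρd.hasFDerivAt.mul hud.hasFDerivAt
    rw [hm.fderiv]; simp
  have hmy : pdy (fun q => ρ q * v q) p = ρ p * pdy v p + v p * pdy ρ p := by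
    simp only [pdy]; have hm : HasFDerivAt (fun q => ρ q * v q) (ρ p • fderiv ℝ v p + v p • fderiv ℝ ρ p) p := hρd.hasFDerivAt.mul hvd.hasFDerivAt
    rw [hm.fderiv]; simp
  have hmass' : ρ p * pdx u p + u p * pdx ρ p + (ρ p * pdy v p + v p * pdy ρ p) = 0 := by
    rw [← hmx, ← hmy]; exact hmass p hp
  -- derivative of the sound speed
  have hρ' := hρd.hasFDerivAt
  have hs' := hsd.hasFDerivAt
  have hrp : HasFDerivAt (fun q => ρ q ^ (γ - 1))
      (((γ - 1) * ρ p ^ (γ - 1 - 1)) • fderiv ℝ ρ p) p :=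
    hρ'.rpow_const (Or.inl hR.ne')
  have hg : HasFDerivAt (fun q => γ * s q * ρ q ^ (γ - 1))
      ((γ * s p) • (((γ - 1) * ρ p ^ (γ - 1 - 1)) • fderiv ℝ ρ p)
        + (ρ p ^ (γ - 1)) • (γ • fderiv ℝ s p)) p :=
    (hs'.const_mul γ).mul hrp
  have hcd : HasFDerivAt (sound γ ρ s)
      ((1 / (2 * Real.sqrt (γ * s p * ρ p ^ (γ - 1)))) •
        ((γ * s p) • (((γ - 1) * ρ p ^ (γ - 1 - 1)) • fderiv ℝ ρ p)
          + (ρ p ^ (γ - 1)) • (γ • fderiv ℝ s p))) p :=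
    (Real.hasDerivAt_sqrt hc2.ne').comp_hasFDerivAt p hg
  have hcx : pdx (sound γ ρ s) p = (1 / (2 * sound γ ρ s p)) *
      ((γ * s p) * ((γ - 1) * ρ p ^ (γ - 1 - 1) * pdx ρ p)
        + ρ p ^ (γ - 1) * (γ * pdx s p)) := by
    rw [pdx, hcd.fderiv]
    simp only [ContinuousLinearMap.smul_apply, ContinuousLinearMap.add_apply, smul_eq_mul, sound,
      pdx]
  have hcy : pdy (sound γ ρ s) p = (1 / (2 * sound γ ρ s p)) *
      ((γ * s p) * ((γ - 1) * ρ p ^ (γ - 1 - 1) * pdy ρ p)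
        + ρ p ^ (γ - 1) * (γ * pdy s p)) := by
    rw [pdy, hcd.fderiv]
    simp only [ContinuousLinearMap.smul_apply, ContinuousLinearMap.add_apply, smul_eq_mul, sound,
      pdy]
  -- entropy is constant along streamlines
  have hent' : Real.cos (σ p) * pdx s p + Real.sin (σ p) * pdy s p = 0 := by
    have h := hent p hp
    rw [huσ p hp, hvσ p hp] at h
    have h2 : speed u v p * (Real.cos (σ p) * pdx s p + Real.sin (σ p) * pdy s p) = 0 := by
      linear_combination h
    exact (mul_eq_zero.mp h2).resolve_left hq.ne'
  -- algebraic identities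
  have hcsq : sound γ ρ s p ^ 2 = γ * s p * ρ p ^ (γ - 1) := Real.sq_sqrt hc2.le
  have hFE : ρ p ^ (γ - 1 - 1) = ρ p ^ (γ - 1) / ρ p := Real.rpow_sub_one hR.ne' _
  rw [huσ p hp, hvσ p hp] at hmass'
  have hL : pdx u p + pdy v p =
      -(speed u v p * (Real.cos (σ p) * pdx ρ p + Real.sin (σ p) * pdy ρ p)) / ρ p := by
    field_simp
    linear_combination hmass'
  have hdd : dd σ (sound γ ρ s) p =
      (γ - 1) * sound γ ρ s p * (Real.cos (σ p) * pdx ρ p + Real.sin (σ p) * pdy ρ p)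
        / (2 * ρ p) := by
    have hcinv : γ * s p * ρ p ^ (γ - 1) / sound γ ρ s p = sound γ ρ s p := by
      rw [div_eq_iff hc.ne', ← pow_two]; exact hcsq.symm
    rw [dd, hcx, hcy, hFE]
    linear_combination (ρ p ^ (γ - 1) * γ / (2 * sound γ ρ s p)) * hent'
      + ((γ - 1) * (Real.cos (σ p) * pdx ρ p + Real.sin (σ p) * pdy ρ p)
          / (2 * ρ p)) * hcinv
  rw [hL, hdd, hsinA p hp]
  field_simp [hc.ne', hq.ne', hR.ne', hγ1]

end
end

section
/- Let (u, v, ρ, s) be a C¹ supersonic solution of the smooth-flow 2D steady full Euler system on U, with flow angle σ, Mach angle A ∈ (0, π/2), α = σ + A, and τ = 1/ρ. Then on U: τ_y sₓ − τₓ s_y = −(∂₊s / sin A) ∂₀τ. -/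
open Real

noncomputable section

/-- `τ_y sₓ − τₓ s_y = −(∂₊s / sin A) ∂₀τ`, with `τ = 1/ρ`. -/
theorem stmt_14 (γ : ℝ) (hγ : 1 < γ) (U : Set (ℝ × ℝ)) (hU : IsOpen U)
    (u v ρ s σ A : ℝ × ℝ → ℝ)
    (hu : ContDiffOn ℝ 1 u U) (hv : ContDiffOn ℝ 1 v U)
    (hρ : ContDiffOn ℝ 1 ρ U) (hs : ContDiffOn ℝ 1 s U)
    (hσ : ContDiffOn ℝ 1 σ U) (hA : ContDiffOn ℝ 1 A U)
    (hρpos : ∀ p ∈ U, 0 < ρ p) (hspos : ∀ p ∈ U, 0 < s p)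
    (hmass : ∀ p ∈ U, pdx (fun q => ρ q * u q) p + pdy (fun q => ρ q * v q) p = 0)
    (hmomx : ∀ p ∈ U,
      u p * pdx u p + v p * pdy u p + (ρ p)⁻¹ * pdx (fun q => s q * ρ q ^ γ) p = 0)
    (hmomy : ∀ p ∈ U,
      u p * pdx v p + v p * pdy v p + (ρ p)⁻¹ * pdy (fun q => s q * ρ q ^ γ) p = 0)
    (hent : ∀ p ∈ U, u p * pdx s p + v p * pdy s p = 0)
    (hsup : ∀ p ∈ U, (sound γ ρ s p) ^ 2 < u p ^ 2 + v p ^ 2)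
    (huσ : ∀ p ∈ U, u p = speed u v p * Real.cos (σ p))
    (hvσ : ∀ p ∈ U, v p = speed u v p * Real.sin (σ p))
    (hsinA : ∀ p ∈ U, Real.sin (A p) = sound γ ρ s p / speed u v p)
    (hA0 : ∀ p ∈ U, 0 < A p) (hA2 : ∀ p ∈ U, A p < Real.pi / 2)
    :
    ∀ p ∈ U,
      pdy (fun q => (ρ q)⁻¹) p * pdx s p - pdx (fun q => (ρ q)⁻¹) p * pdy s p =
        -(dd (fun r => σ r + A r) s p / Real.sin (A p)) *
          dd σ (fun q => (ρ q)⁻¹) p := by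

  intro p hp
  have hcpos : 0 < sound γ ρ s p := by
    unfold sound
    apply Real.sqrt_pos.2
    exact mul_pos (mul_pos (lt_trans one_pos hγ) (hspos p hp))
      (Real.rpow_pos_of_pos (hρpos p hp) (γ - 1))
  have hqpos : 0 < speed u v p := by
    unfold speed
    apply Real.sqrt_pos.2
    nlinarith [hsup p hp, sq_nonneg (sound γ ρ s p), hcpos]
  have hsApos : 0 < Real.sin (A p) := by
    rw [hsinA p hp]; exact div_pos hcpos hqpos
  -- entropy equation gives ∂₀ s = 0
  have hD : Real.cos (σ p) * pdx s p + Real.sin (σ p) * pdy s p = 0 := by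
    have h := hent p hp
    rw [huσ p hp, hvσ p hp] at h
    have : speed u v p * (Real.cos (σ p) * pdx s p + Real.sin (σ p) * pdy s p) = 0 := by
      ring_nf; ring_nf at h; linarith
    rcases mul_eq_zero.1 this with h' | h'
    · exact absurd h' (ne_of_gt hqpos)
    · exact h'
  set sx := pdx s p
  set sy := pdy s p
  set tx := pdx (fun q => (ρ q)⁻¹) p
  set ty := pdy (fun q => (ρ q)⁻¹) p
  set cσ := Real.cos (σ p)
  set sσ := Real.sin (σ p)
  set cA := Real.cos (A p)
  set sA := Real.sin (A p)
  have hpyth : cσ ^ 2 + sσ ^ 2 = 1 := by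
    simp [cσ, sσ, Real.cos_sq_add_sin_sq]
  have hdd1 : dd (fun r => σ r + A r) s p = sA * (cσ * sy - sσ * sx) := by
    unfold dd
    rw [Real.cos_add, Real.sin_add]
    have : (cσ * cA - sσ * sA) * sx + (sσ * cA + cσ * sA) * sy
        = cA * (cσ * sx + sσ * sy) + sA * (cσ * sy - sσ * sx) := by ring
    rw [this, hD]; ring
  have hdd2 : dd σ (fun q => (ρ q)⁻¹) p = cσ * tx + sσ * ty := rfl
  rw [hdd1, hdd2]
  rw [mul_comm sA, mul_div_assoc, div_self (ne_of_gt hsApos), mul_one]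
  linear_combination (cσ * ty - sσ * tx) * hD + (tx * sy - ty * sx) * hpyth


end
end
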